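/- arXiv:1710.06556 — 7 statements merged into one kernel-verified Lean document; each statement's English description precedes it below -/
import Mathlib

section
/- For every integer n ≥ 1 and all non-negative integers e_1,…,e_n, the identity L_n^{p^{e_n}} · [e_1,…,e_{n−1}, e_n + n] = Σ_{s=0}^{n−1} (−1)^{n+s−1} · [e_1,…,e_{n−1}, e_n + s] · L_{n,s}^{p^{e_n}} holds in R = 𝔽_p[y_1,…,y_n]. (This is the case k = 0 of Proposition 1.2 of the paper, i.e. its equation (1), cleared of denominators using the relation Q_{n,s} = L_{n,s}/L_n defining the Dickson invariants.) -/
/-- The bracket `[e_1,…,e_m]_I`: the determinant `det (y_{ι a} ^ (p ^ e b))` in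
`𝔽_p[y_1,…,y_n]`, where `ι : Fin m → Fin n` enumerates the subset `I`. -/
noncomputable def bracket (p n m : ℕ) (e : Fin m → ℕ) (ι : Fin m → Fin n) :
    MvPolynomial (Fin n) (ZMod p) :=
  Matrix.det (Matrix.of fun a b : Fin m =>
    (MvPolynomial.X (ι a) : MvPolynomial (Fin n) (ZMod p)) ^ p ^ e b)

/-- `Lpoly p n s = L_{n,s} = [0,1,…,ŝ,…,n]` (for `s < n`); `Lpoly p n n = L_n = [0,…,n-1]`. -/
noncomputable def Lpoly (p n s : ℕ) : MvPolynomial (Fin n) (ZMod p) :=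
  bracket p n n (fun j => if (j : ℕ) < s then (j : ℕ) else (j : ℕ) + 1) id

open MvPolynomial Matrix

lemma bracket_pow_p (p n m : ℕ) (hp : p.Prime) (e : Fin m → ℕ) (ι : Fin m → Fin n) (k : ℕ) :
    (bracket p n m e ι) ^ p ^ k = bracket p n m (fun b => e b + k) ι := by
  haveI : Fact p.Prime := ⟨hp⟩
  unfold bracket
  rw [← iterateFrobenius_def (R := MvPolynomial (Fin n) (ZMod p)) (p := p) (n := k),
    RingHom.map_det]
  congr 1
  ext a b
  simp only [RingHom.mapMatrix_apply, Matrix.map_apply, Matrix.of_apply, iterateFrobenius_def, ← pow_mul, ← pow_add]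

lemma key (p : ℕ) (hp : p.Prime) (m c : ℕ) (e : Fin (m+1) → ℕ) :
    bracket p (m+1) (m+1) (fun j => (if (j:ℕ) < m+1 then (j:ℕ) else (j:ℕ)+1) + c) id *
      bracket p (m+1) (m+1) (Function.update e (Fin.last m) (c + (m+1))) id =
    ∑ s ∈ Finset.range (m+1),
      (-1 : MvPolynomial (Fin (m+1)) (ZMod p)) ^ (m + 1 + s - 1) *
        bracket p (m+1) (m+1) (Function.update e (Fin.last m) (c + s)) id *
        bracket p (m+1) (m+1) (fun j => (if (j:ℕ) < s then (j:ℕ) else (j:ℕ)+1) + c) id := by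
  haveI : Fact p.Prime := ⟨hp⟩
  set R := MvPolynomial (Fin (m+1)) (ZMod p) with hR
  set A : ℕ → R := fun s => bracket p (m+1) (m+1) (Function.update e (Fin.last m) (c + s)) id with hA
  set B : ℕ → R := fun s =>
    bracket p (m+1) (m+1) (fun j => (if (j:ℕ) < s then (j:ℕ) else (j:ℕ)+1) + c) id with hB
  show B (m+1) * A (m+1) = ∑ s ∈ Finset.range (m+1), (-1)^(m+1+s-1) * A s * B s
  set M : Matrix (Fin (m+2)) (Fin (m+2)) R := Matrix.of fun i s =>
    Fin.lastCases (A (s:ℕ)) (fun a => (MvPolynomial.X a : R) ^ p ^ (c + (s:ℕ))) i with hM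
  have hMlast : ∀ s : Fin (m+2), M (Fin.last (m+1)) s = A (s:ℕ) := by
    intro s; simp [hM]
  have hMcast : ∀ (a : Fin (m+1)) (s : Fin (m+2)),
      M (Fin.castSucc a) s = (MvPolynomial.X a : R) ^ p ^ (c + (s:ℕ)) := by
    intro a s; simp [hM]
  have hsa : ∀ (j : Fin (m+2)) (b : Fin (m+1)), ((j.succAbove b : Fin (m+2)) : ℕ) =
      if (b:ℕ) < (j:ℕ) then (b:ℕ) else (b:ℕ)+1 := by
    intro j b
    rcases lt_or_ge (Fin.castSucc b) j with h | h
    · rw [Fin.succAbove_of_castSucc_lt _ _ h, if_pos (by simpa [Fin.lt_def] using h),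
        Fin.coe_castSucc]
    · rw [Fin.succAbove_of_le_castSucc _ _ h,
        if_neg (by simpa [Fin.lt_def, Fin.le_def, not_lt] using h), Fin.val_succ]
  set coef : Fin (m+1) → R := fun a => (-1 : R) ^ ((a:ℕ)+m) *
      Matrix.det (Matrix.of fun a' b' : Fin m =>
        (MvPolynomial.X (a.succAbove a') : R) ^ p ^ (e (Fin.castSucc b'))) with hcoef
  have hAexp : ∀ s : ℕ, A s = ∑ a : Fin (m+1), coef a * (MvPolynomial.X a : R) ^ p ^ (c + s) := by
    intro s
    rw [hA]
    show bracket p (m+1) (m+1) (Function.update e (Fin.last m) (c + s)) id = _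
    unfold bracket
    rw [Matrix.det_succ_column _ (Fin.last m)]
    refine Finset.sum_congr rfl fun a _ => ?_
    have h1 : (Matrix.of fun a b : Fin (m+1) =>
        (MvPolynomial.X (id a) : R) ^ p ^ (Function.update e (Fin.last m) (c+s) b)) a (Fin.last m)
        = (MvPolynomial.X a : R) ^ p ^ (c + s) := by
      simp
    have h2 : ((Matrix.of fun a b : Fin (m+1) =>
        (MvPolynomial.X (id a) : R) ^ p ^ (Function.update e (Fin.last m) (c+s) b)).submatrix
          a.succAbove (Fin.last m).succAbove)
        = Matrix.of fun a' b' : Fin m =>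
            (MvPolynomial.X (a.succAbove a') : R) ^ p ^ (e (Fin.castSucc b')) := by
      ext a' b'
      simp only [Matrix.submatrix_apply, Matrix.of_apply, Fin.succAbove_last, id]
      rw [Function.update_of_ne (Fin.ne_last_of_lt (Fin.castSucc_lt_last b'))]
    rw [h1, h2, hcoef, Fin.val_last]
    ring
  have hrow : M (Fin.last (m+1)) = ∑ a : Fin (m+1), coef a • M (Fin.castSucc a) := by
    funext s
    rw [hMlast, hAexp (s:ℕ), Finset.sum_apply]
    refine Finset.sum_congr rfl fun a _ => ?_
    rw [Pi.smul_apply, hMcast, smul_eq_mul]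
  have hdet0 : M.det = 0 := by
    set C : Fin (m+2) → R := fun i => Fin.lastCases 0 coef i with hC
    have h1 : ∑ k : Fin (m+2), C k • M k = ∑ a : Fin (m+1), coef a • M (Fin.castSucc a) := by
      rw [Fin.sum_univ_castSucc]
      simp [hC]
    have h2 := Matrix.det_updateRow_sum M (Fin.last (m+1)) C
    rw [h1, ← hrow, Matrix.updateRow_eq_self] at h2
    simpa [hC] using h2
  have hminor : ∀ j : Fin (m+2),
      Matrix.det (M.submatrix (Fin.last (m+1)).succAbove j.succAbove) = B (j:ℕ) := by
    intro j
    rw [hB]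
    show _ = bracket p (m+1) (m+1) (fun b => (if (b:ℕ) < (j:ℕ) then (b:ℕ) else (b:ℕ)+1) + c) id
    unfold bracket
    refine congrArg Matrix.det (Matrix.ext fun a b => ?_)
    rw [Matrix.submatrix_apply, Fin.succAbove_last, hMcast, Matrix.of_apply, hsa]
    simp only [id_eq]
    rw [Nat.add_comm c]
  have hexp := Matrix.det_succ_row M (Fin.last (m+1))
  rw [hdet0] at hexp
  simp only [hMlast, hminor, Fin.val_last, Fin.coe_castSucc] at hexp
  rw [Fin.sum_univ_castSucc] at hexp
  simp only [Fin.val_last, Fin.coe_castSucc] at hexp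
  rw [← Fin.sum_univ_eq_sum_range (fun s => (-1:R)^(m+1+s-1) * A s * B s) (m+1)]
  have hsum : ∑ j : Fin (m+1), (-1:R)^(m+1+(j:ℕ)) * A (j:ℕ) * B (j:ℕ)
      = -∑ j : Fin (m+1), (-1:R)^(m+1+(j:ℕ)-1) * A (j:ℕ) * B (j:ℕ) := by
    rw [← Finset.sum_neg_distrib]
    refine Finset.sum_congr rfl fun j _ => ?_
    rw [show m+1+(j:ℕ)-1 = m+(j:ℕ) from by omega, show m+1+(j:ℕ) = (m+(j:ℕ))+1 from by omega,
      pow_succ]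
    ring
  have heven : ((-1:R))^(m+1+(m+1)) = 1 := Even.neg_one_pow ⟨m+1, by ring⟩
  rw [hsum, heven] at hexp
  linear_combination -hexp

/-- Case `k = 0` of Proposition 1.2:
`L_n^{p^{e_n}} · [e_1,…,e_{n−1}, e_n + n]
  = Σ_{s=0}^{n−1} (−1)^{n+s−1} · [e_1,…,e_{n−1}, e_n + s] · L_{n,s}^{p^{e_n}}`. -/
theorem statement0 (p : ℕ) (hp : p.Prime) (hodd : Odd p) (n : ℕ) (hn : 1 ≤ n)
    (e : Fin n → ℕ) :
    Lpoly p n n ^ p ^ e ⟨n - 1, by omega⟩ *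
        bracket p n n
          (Function.update e ⟨n - 1, by omega⟩ (e ⟨n - 1, by omega⟩ + n)) id =
      ∑ s ∈ Finset.range n,
        (-1 : MvPolynomial (Fin n) (ZMod p)) ^ (n + s - 1) *
          bracket p n n
            (Function.update e ⟨n - 1, by omega⟩ (e ⟨n - 1, by omega⟩ + s)) id *
          Lpoly p n s ^ p ^ e ⟨n - 1, by omega⟩ := by
  obtain ⟨m, rfl⟩ : ∃ m, n = m + 1 := ⟨n - 1, by omega⟩
  have hl : (⟨m + 1 - 1, by omega⟩ : Fin (m+1)) = Fin.last m := rfl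
  simp only [hl, Lpoly, bracket_pow_p p _ _ hp]
  exact key p hp m (e (Fin.last m)) e
end

section
/- For every integer n ≥ 2 and all non-negative integers e_1,…,e_n, writing K := {1,…,n−1}, the identity ([0,1,…,n−2]_K)^{p^{e_n}} · [e_1,…,e_{n−1}, e_n + n − 1] = Σ_{s=0}^{n−2} (−1)^{n+s} · [e_1,…,e_{n−1}, e_n + s] · ([0,…,ŝ,…,n−1]_K)^{p^{e_n}} + [e_1,…,e_{n−1}]_K · L_n^{p^{e_n}} holds in R = 𝔽_p[y_1,…,y_n]. (This is equation (2) of the paper, cleared of denominators using Q_{n−1,s} = [0,…,ŝ,…,n−1]_K/[0,…,n−2]_K and V_n = L_n/[0,…,n−2]_K.) -/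
open Matrix MvPolynomial

lemma key_s1 {R : Type*} [CommRing R] (m : ℕ) (A B : Matrix (Fin (m+1)) (Fin (m+1)) R) :
    ∑ s : Fin (m+1),
        (-1 : R) ^ (m + (s : ℕ)) *
          (B.updateCol (Fin.last m) (fun i => A i s)).det *
          (A.submatrix (Fin.last m).succAbove s.succAbove).det
      = A.det * (B.submatrix Fin.castSucc Fin.castSucc).det := by
  classical
  set x : Fin (m+1) → R := fun s =>
    (-1 : R) ^ (m + (s : ℕ)) * (A.submatrix (Fin.last m).succAbove s.succAbove).det with hx
  have hv : ∀ i, (∑ s, x s * A i s) = if i = Fin.last m then A.det else 0 := by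
    intro i
    have hexp := Matrix.det_succ_row (A.updateRow (Fin.last m) (A i)) (Fin.last m)
    have hsub : ∀ s : Fin (m+1),
        ((A.updateRow (Fin.last m) (A i)).submatrix (Fin.last m).succAbove s.succAbove)
          = A.submatrix (Fin.last m).succAbove s.succAbove := by
      intro s; ext a b
      rw [Matrix.submatrix_apply, Matrix.submatrix_apply,
        Matrix.updateRow_ne (Fin.succAbove_ne _ _)]
    have h1 : ∑ s, x s * A i s = (A.updateRow (Fin.last m) (A i)).det := by
      rw [hexp]
      refine Finset.sum_congr rfl fun s _ => ?_
      rw [hsub s, Matrix.updateRow_self, hx]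
      simp only [Fin.val_last]
      ring
    rw [h1]
    by_cases h : i = Fin.last m
    · subst h; rw [Matrix.updateRow_eq_self, if_pos rfl]
    · rw [if_neg h]
      refine Matrix.det_zero_of_row_eq h ?_
      rw [Matrix.updateRow_ne h, Matrix.updateRow_self]
  have hstep : ∑ s : Fin (m+1), x s * (B.updateCol (Fin.last m) (fun i => A i s)).det
      = A.det * (B.updateCol (Fin.last m) (Pi.single (Fin.last m) 1)).det := by
    have h2 : ∀ s, (B.updateCol (Fin.last m) (fun i => A i s)).det
        = Matrix.cramer B (fun i => A i s) (Fin.last m) :=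
      fun s => (Matrix.cramer_apply _ _ _).symm
    simp only [h2]
    have h3 : ∑ s : Fin (m+1), x s • Matrix.cramer B (fun i => A i s)
        = Matrix.cramer B (fun i => ∑ s, x s * A i s) := by
      have := map_sum (Matrix.cramer B) (fun s => x s • (fun i => A i s : Fin (m+1) → R)) Finset.univ
      rw [Finset.sum_congr rfl (fun s _ => ((Matrix.cramer B).map_smul (x s) _).symm), ← this]
      congr 1
      funext i
      simp [Finset.sum_apply, Pi.smul_apply, smul_eq_mul]
    have h4 : (fun i => ∑ s, x s * A i s) = Pi.single (Fin.last m) A.det := by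
      funext i
      rw [hv i, Pi.single_apply]
    have h5 : (Pi.single (Fin.last m) A.det : Fin (m+1) → R)
        = A.det • (Pi.single (Fin.last m) 1 : Fin (m+1) → R) := by
      funext i
      by_cases h : i = Fin.last m <;> simp [Pi.single_apply, h]
    calc ∑ s : Fin (m+1), x s * Matrix.cramer B (fun i => A i s) (Fin.last m)
        = (∑ s : Fin (m+1), x s • Matrix.cramer B (fun i => A i s)) (Fin.last m) := by
          simp [Finset.sum_apply]
      _ = Matrix.cramer B (Pi.single (Fin.last m) A.det) (Fin.last m) := by
          rw [h3, h4]
      _ = A.det * Matrix.cramer B (Pi.single (Fin.last m) 1) (Fin.last m) := by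
          rw [h5, _root_.map_smul]; rfl
      _ = A.det * (B.updateCol (Fin.last m) (Pi.single (Fin.last m) 1)).det := by
          rw [Matrix.cramer_apply]
  have hfinal : (B.updateCol (Fin.last m) (Pi.single (Fin.last m) 1)).det
      = (B.submatrix Fin.castSucc Fin.castSucc).det := by
    rw [Matrix.det_succ_column (B.updateCol (Fin.last m) (Pi.single (Fin.last m) 1))
      (Fin.last m)]
    rw [Finset.sum_eq_single (Fin.last m)]
    · rw [Matrix.updateCol_self, Pi.single_eq_same, Fin.val_last,
        Even.neg_one_pow (⟨m, rfl⟩ : Even (m + m)), one_mul, one_mul]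
      congr 1
      ext a b
      rw [Matrix.submatrix_apply, Matrix.submatrix_apply,
        Matrix.updateCol_ne (Fin.succAbove_ne _ _), Fin.succAbove_last]
    · intro i _ hi
      rw [Matrix.updateCol_self, Pi.single_eq_of_ne hi]
      ring
    · simp
  calc ∑ s : Fin (m+1),
        (-1 : R) ^ (m + (s : ℕ)) *
          (B.updateCol (Fin.last m) (fun i => A i s)).det *
          (A.submatrix (Fin.last m).succAbove s.succAbove).det
      = ∑ s : Fin (m+1), x s * (B.updateCol (Fin.last m) (fun i => A i s)).det := by
        refine Finset.sum_congr rfl fun s _ => ?_; rw [hx]; ring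
    _ = A.det * (B.submatrix Fin.castSucc Fin.castSucc).det := by rw [hstep, hfinal]

lemma det_pow_expChar {R : Type*} [CommRing R] (p : ℕ) [ExpChar R p] (k : ℕ)
    {N : Type*} [DecidableEq N] [Fintype N] (M : Matrix N N R) :
    M.det ^ p ^ k = (M.map fun x => x ^ p ^ k).det := by
  have h := RingHom.map_det (iterateFrobenius R p k) M
  simpa [iterateFrobenius_def, Matrix.map] using h

lemma main_aux (p : ℕ) (hp : p.Prime) (m : ℕ) (e : Fin (m + 1 + 1) → ℕ) :
    bracket p (m+1+1) (m+1) (fun j => (j : ℕ)) Fin.castSucc ^ p ^ e (Fin.last (m+1)) *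
        bracket p (m+1+1) (m+1+1)
          (Function.update e (Fin.last (m+1)) (e (Fin.last (m+1)) + (m+1))) id =
      (∑ s ∈ Finset.range (m+1),
        (-1 : MvPolynomial (Fin (m+1+1)) (ZMod p)) ^ (m + 1 + 1 + s) *
          bracket p (m+1+1) (m+1+1)
            (Function.update e (Fin.last (m+1)) (e (Fin.last (m+1)) + s)) id *
          bracket p (m+1+1) (m+1) (fun j => if (j : ℕ) < s then (j : ℕ) else (j : ℕ) + 1)
              Fin.castSucc ^ p ^ e (Fin.last (m+1))) +
        bracket p (m+1+1) (m+1) (fun j => e (Fin.castSucc j)) Fin.castSucc *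
          Lpoly p (m+1+1) (m+1+1) ^ p ^ e (Fin.last (m+1)) := by
  haveI : Fact p.Prime := ⟨hp⟩
  set R' := MvPolynomial (Fin (m + 1 + 1)) (ZMod p) with hR'
  set k := e (Fin.last (m + 1)) with hk
  set A : Matrix (Fin (m+1+1)) (Fin (m+1+1)) R' :=
    Matrix.of (fun i s => (MvPolynomial.X i : R') ^ p ^ (k + (s : ℕ))) with hA
  set B : Matrix (Fin (m+1+1)) (Fin (m+1+1)) R' :=
    Matrix.of (fun a b => (MvPolynomial.X a : R') ^ p ^ e b) with hB
  -- (a) Frobenius-power of full-column K-bracket (no gap)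
  have ha : bracket p (m+1+1) (m+1) (fun j => (j : ℕ)) Fin.castSucc ^ p ^ k
      = Matrix.det (Matrix.of fun a b : Fin (m+1) =>
          (MvPolynomial.X (Fin.castSucc a) : R') ^ p ^ (k + (b : ℕ))) := by
    unfold bracket
    rw [det_pow_expChar p k]
    congr 1
    refine Matrix.ext fun a b => ?_
    simp only [Matrix.map_apply, Matrix.of_apply]
    rw [← pow_mul, ← pow_add]
    exact congrArg (HPow.hPow _) (congrArg (HPow.hPow p) (Nat.add_comm _ _))
  -- (b) Frobenius-power of gap brackets
  have hb : ∀ s : ℕ,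
      bracket p (m+1+1) (m+1) (fun j => if (j : ℕ) < s then (j : ℕ) else (j : ℕ) + 1)
          Fin.castSucc ^ p ^ k
      = Matrix.det (Matrix.of fun a b : Fin (m+1) =>
          (MvPolynomial.X (Fin.castSucc a) : R') ^
            p ^ (k + if (b : ℕ) < s then (b : ℕ) else (b : ℕ) + 1)) := by
    intro s
    unfold bracket
    rw [det_pow_expChar p k]
    congr 1
    refine Matrix.ext fun a b => ?_
    simp only [Matrix.map_apply, Matrix.of_apply]
    rw [← pow_mul, ← pow_add]
    exact congrArg (HPow.hPow _) (congrArg (HPow.hPow p) (Nat.add_comm _ _))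
  -- (c) updated brackets as updateColumn determinants
  have hc : ∀ t : ℕ,
      bracket p (m+1+1) (m+1+1) (Function.update e (Fin.last (m+1)) (k + t)) id
      = (B.updateCol (Fin.last (m+1))
          (fun i => (MvPolynomial.X i : R') ^ p ^ (k + t))).det := by
    intro t
    unfold bracket
    congr 1
    refine Matrix.ext fun a b => ?_
    rw [Matrix.updateCol_apply, Matrix.of_apply, Function.update_apply]
    split_ifs <;> simp [hB]
  -- (d) the K-bracket with exponents e
  have hd : bracket p (m+1+1) (m+1) (fun j => e (Fin.castSucc j)) Fin.castSucc
      = (B.submatrix Fin.castSucc Fin.castSucc).det := by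
    unfold bracket
    congr 1
  -- (e) Lpoly as det A
  have he : Lpoly p (m+1+1) (m+1+1) ^ p ^ k = A.det := by
    unfold Lpoly bracket
    rw [det_pow_expChar p k]
    congr 1
    refine Matrix.ext fun a b => ?_
    simp only [Matrix.map_apply, Matrix.of_apply, hA, id_eq, b.isLt, if_pos]
    rw [← pow_mul, ← pow_add]
    exact congrArg (HPow.hPow _) (congrArg (HPow.hPow p) (Nat.add_comm _ _))
  have hupd : ∀ t : ℕ, e (Fin.last (m+1)) + t = k + t := fun t => rfl
  rw [ha, hupd (m+1), hupd, hc (m+1), hd, he, ← Fin.sum_univ_eq_sum_range]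
  -- now the key identity
  have keyEq := key_s1 (m+1) A B
  rw [Fin.sum_univ_castSucc] at keyEq
  simp only [Fin.coe_castSucc, Fin.val_last] at keyEq
  -- normalize the terms of keyEq
  have hT : ∀ s : Fin (m+1),
      (B.updateCol (Fin.last (m+1)) (fun i => A i (Fin.castSucc s))).det
      = (B.updateCol (Fin.last (m+1))
          (fun i => (MvPolynomial.X i : R') ^ p ^ (k + (s : ℕ)))).det := by
    intro s
    congr 1
  have hTlast :
      (B.updateCol (Fin.last (m+1)) (fun i => A i (Fin.last (m+1)))).det
      = (B.updateCol (Fin.last (m+1))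
          (fun i => (MvPolynomial.X i : R') ^ p ^ (k + (m + 1)))).det := by
    congr 1
  have hD : ∀ s : Fin (m+1),
      (A.submatrix (Fin.last (m+1)).succAbove (Fin.castSucc s).succAbove).det
      = Matrix.det (Matrix.of fun a b : Fin (m+1) =>
          (MvPolynomial.X (Fin.castSucc a) : R') ^
            p ^ (k + if (b : ℕ) < (s : ℕ) then (b : ℕ) else (b : ℕ) + 1)) := by
    intro s
    congr 1
    refine Matrix.ext fun a b => ?_
    simp only [Matrix.submatrix_apply, Matrix.of_apply, hA, Fin.succAbove_last,
      Fin.succAbove, Fin.lt_def, Fin.coe_castSucc]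
    split_ifs <;> simp
  have hDlast :
      (A.submatrix (Fin.last (m+1)).succAbove (Fin.last (m+1)).succAbove).det
      = Matrix.det (Matrix.of fun a b : Fin (m+1) =>
          (MvPolynomial.X (Fin.castSucc a) : R') ^ p ^ (k + (b : ℕ))) := by
    congr 1
    refine Matrix.ext fun a b => ?_
    simp only [Matrix.submatrix_apply, Matrix.of_apply, hA, Fin.succAbove_last,
      Fin.coe_castSucc]
  rw [hTlast, hDlast, show ((-1 : R') ^ (m + 1 + (m + 1)) = 1) from
    Even.neg_one_pow ⟨m + 1, rfl⟩, one_mul] at keyEq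
  simp only [hT, hD] at keyEq
  -- normalize the goal's sum
  simp only [hc, hb]
  have hsign : ∀ s : Fin (m+1), (-1 : R') ^ (m + 1 + 1 + (s : ℕ))
      = -((-1 : R') ^ (m + 1 + (s : ℕ))) := by
    intro s
    rw [show m + 1 + 1 + (s : ℕ) = (m + 1 + (s : ℕ)) + 1 from by omega, pow_succ]
    ring
  simp only [hsign, neg_mul]
  rw [Finset.sum_neg_distrib]
  linear_combination keyEq

/-- Equation (2) of the paper, cleared of denominators.  Here `K = {1,…,n−1}` is the
set of the first `n−1` variables, realized by the embedding `Fin.castLE : Fin (n-1) → Fin n`: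
`([0,…,n−2]_K)^{p^{e_n}} · [e_1,…,e_{n−1}, e_n + n − 1]
  = Σ_{s=0}^{n−2} (−1)^{n+s} · [e_1,…,e_{n−1}, e_n + s] · ([0,…,ŝ,…,n−1]_K)^{p^{e_n}}
    + [e_1,…,e_{n−1}]_K · L_n^{p^{e_n}}`. -/
theorem statement1 (p : ℕ) (hp : p.Prime) (hodd : Odd p) (n : ℕ) (hn : 2 ≤ n)
    (e : Fin n → ℕ) :
    bracket p n (n - 1) (fun j => (j : ℕ)) (Fin.castLE (by omega)) ^
          p ^ e ⟨n - 1, by omega⟩ *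
        bracket p n n
          (Function.update e ⟨n - 1, by omega⟩ (e ⟨n - 1, by omega⟩ + (n - 1))) id =
      (∑ s ∈ Finset.range (n - 1),
        (-1 : MvPolynomial (Fin n) (ZMod p)) ^ (n + s) *
          bracket p n n
            (Function.update e ⟨n - 1, by omega⟩ (e ⟨n - 1, by omega⟩ + s)) id *
          bracket p n (n - 1) (fun j => if (j : ℕ) < s then (j : ℕ) else (j : ℕ) + 1)
              (Fin.castLE (by omega)) ^ p ^ e ⟨n - 1, by omega⟩) +
        bracket p n (n - 1) (fun j => e (Fin.castLE (by omega) j)) (Fin.castLE (by omega)) *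
          Lpoly p n n ^ p ^ e ⟨n - 1, by omega⟩ := by
  obtain ⟨m, rfl⟩ : ∃ m, n = m + 1 + 1 := ⟨n - 2, by omega⟩
  exact main_aux p hp m e
end

section
/- (Proposition 1.2 of the paper, cleared of denominators.) For every integer n ≥ 1, every k with 0 ≤ k ≤ n−1, and all non-negative integers e_{k+1},…,e_n, the identity L_n^{p^{e_n}} · [k; e_{k+1},…,e_{n−1}, e_n + n] = Σ_{s=0}^{n−1} (−1)^{n+s−1} · [k; e_{k+1},…,e_{n−1}, e_n + s] · L_{n,s}^{p^{e_n}} holds in the exterior algebra A over R, where elements of R act as scalars. -/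
set_option synthInstance.maxHeartbeats 1000000
set_option maxHeartbeats 1000000

/-- The exterior algebra `A` over `R = 𝔽_p[y_1,…,y_n]` on the free module `R^n`. -/
noncomputable abbrev ExtAlg (p n : ℕ) :=
  ExteriorAlgebra (MvPolynomial (Fin n) (ZMod p)) (Fin n → MvPolynomial (Fin n) (ZMod p))

/-- The generator `x_i` of the exterior algebra. -/
noncomputable def xgen (p n : ℕ) (i : Fin n) : ExtAlg p n :=
  ExteriorAlgebra.ι (MvPolynomial (Fin n) (ZMod p)) (Pi.single i 1)

/-- The Mùi bracket `[k; e_{k+1},…,e_n] = Σ_I sign(σ_I) · x_I · [e_{k+1},…,e_n]_{I'}`,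
the sum running over all `k`-element subsets `I` of `{1,…,n}` with complement `I'`;
`σ_I` is the permutation sending `(1,…,n)` to `(i_1,…,i_k,i_{k+1},…,i_n)` where
`I = {i_1 < … < i_k}` and `I' = {i_{k+1} < … < i_n}`. -/
noncomputable def muiBracket (p n k : ℕ) (e : Fin (n - k) → ℕ) : ExtAlg p n :=
  ∑ I : Finset (Fin n),
    if hI : I.card = k then
      have hk : k ≤ n := by
        have h1 := Finset.card_le_univ I
        rw [hI, Fintype.card_fin] at h1
        exact h1
      have hIc : Iᶜ.card = n - k := by
        simp [Finset.card_compl, hI]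
      ((Equiv.Perm.sign
        ((finCongr (Nat.add_sub_cancel' hk).symm).trans
          (finSumFinEquiv.symm.trans
            ((Equiv.sumCongr (I.orderIsoOfFin hI).toEquiv
              ((Iᶜ.orderIsoOfFin hIc).toEquiv.trans
                (Equiv.subtypeEquivRight fun x => Finset.mem_compl))).trans
              (Equiv.sumCompl (· ∈ I)))))) : ℤ) •
      ((List.ofFn fun a : Fin k => xgen p n ((I.orderIsoOfFin hI) a)).prod *
        algebraMap (MvPolynomial (Fin n) (ZMod p)) (ExtAlg p n)
          (bracket p n (n - k) e fun b => ((Iᶜ.orderIsoOfFin hIc) b : Fin n)))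
    else 0


lemma det_updateColumn_finset_sum {S : Type*} [CommRing S] {m : Type*} [DecidableEq m]
    [Fintype m] (M : Matrix m m S) (t : m) {ι' : Type*} (s : Finset ι') (v : ι' → m → S) :
    Matrix.det (M.updateCol t (fun a => ∑ i ∈ s, v i a)) =
      ∑ i ∈ s, Matrix.det (M.updateCol t (v i)) := by
  classical
  induction s using Finset.induction_on with
  | empty =>
      simp only [Finset.sum_empty]
      exact Matrix.det_eq_zero_of_column_eq_zero t (fun a => by simp)
  | @insert i s hi ih =>
      simp only [Finset.sum_insert hi]
      rw [show (fun a => v i a + ∑ j ∈ s, v j a) = (v i + fun a => ∑ j ∈ s, v j a) from rfl,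
        Matrix.det_updateCol_add, ih]

lemma succAbove_val {n : ℕ} (s : Fin (n + 1)) (b : Fin n) :
    ((s.succAbove b : Fin (n + 1)) : ℕ) =
      if (b : ℕ) < (s : ℕ) then (b : ℕ) else (b : ℕ) + 1 := by
  rcases lt_or_ge ((b : ℕ)) ((s : ℕ)) with h | h
  · rw [if_pos h, Fin.succAbove, if_pos (by simpa [Fin.lt_def] using h)]
    simp
  · rw [if_neg (not_lt.2 h), Fin.succAbove, if_neg (by simpa [Fin.lt_def] using h)]
    simp

lemma pow_Lpoly {p n : ℕ} (hp : p.Prime) (E : ℕ) (s : Fin (n + 1)) :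
    Lpoly p n (s : ℕ) ^ p ^ E =
      Matrix.det (Matrix.of fun a b : Fin n =>
        (MvPolynomial.X a : MvPolynomial (Fin n) (ZMod p)) ^
          p ^ (E + ((s.succAbove b : Fin (n + 1)) : ℕ))) := by
  haveI := Fact.mk hp
  set R := MvPolynomial (Fin n) (ZMod p)
  have h := (iterateFrobenius R p E).map_det (Matrix.of fun a b : Fin n =>
      (MvPolynomial.X a : R) ^ p ^ (if (b : ℕ) < (s : ℕ) then (b : ℕ) else (b : ℕ) + 1))
  rw [iterateFrobenius_def] at h
  rw [show Lpoly p n (s : ℕ) ^ p ^ E = _ from h]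
  refine congrArg Matrix.det (Matrix.ext fun a b => ?_)
  simp only [RingHom.mapMatrix_apply, Matrix.map_apply, Matrix.of_apply, iterateFrobenius_def,
    ← pow_mul, ← pow_add, succAbove_val]
  rw [add_comm E]

lemma key_scalar {p n : ℕ} (hp : p.Prime) (hn : 1 ≤ n) (j : Fin n) (E : ℕ) :
    (MvPolynomial.X j : MvPolynomial (Fin n) (ZMod p)) ^ p ^ (E + n) * Lpoly p n n ^ p ^ E =
      ∑ s ∈ Finset.range n, (-1 : MvPolynomial (Fin n) (ZMod p)) ^ (n + s - 1) *
        Lpoly p n s ^ p ^ E * (MvPolynomial.X j : MvPolynomial (Fin n) (ZMod p)) ^ p ^ (E + s) := by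
  classical
  set R := MvPolynomial (Fin n) (ZMod p) with hR
  set g : Fin (n + 1) → Fin n := fun a => if h : (a : ℕ) < n then ⟨a, h⟩ else j with hg
  set N : Matrix (Fin (n + 1)) (Fin (n + 1)) R :=
    Matrix.of (fun a b => (MvPolynomial.X (g a) : R) ^ p ^ (E + (b : ℕ))) with hN
  have h0 : N.det = 0 := by
    refine Matrix.det_zero_of_row_eq (i := Fin.castSucc j) (j := Fin.last n) ?_ ?_
    · intro h
      have := congrArg Fin.val h
      simp at this
      omega
    · funext b
      have h1 : g (Fin.castSucc j) = j := by
        simp [hg, Fin.is_lt]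
      have h2 : g (Fin.last n) = j := by
        simp [hg]
      simp [hN, h1, h2]
  have hexp := Matrix.det_succ_row N (Fin.last n)
  rw [h0] at hexp
  have hterm : ∀ b : Fin (n + 1),
      (-1 : R) ^ ((Fin.last n : ℕ) + (b : ℕ)) * N (Fin.last n) b *
          (N.submatrix (Fin.last n).succAbove b.succAbove).det =
        (-1 : R) ^ (n + (b : ℕ)) *
          ((MvPolynomial.X j : R) ^ p ^ (E + (b : ℕ)) * Lpoly p n (b : ℕ) ^ p ^ E) := by
    intro b
    have hsub : N.submatrix (Fin.last n).succAbove b.succAbove =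
        Matrix.of fun a c : Fin n =>
          (MvPolynomial.X a : R) ^ p ^ (E + ((b.succAbove c : Fin (n + 1)) : ℕ)) := by
      ext a c
      have : g (Fin.castSucc a) = a := by simp [hg, Fin.is_lt]
      simp [hN, Fin.succAbove_last, this]
    rw [hsub, ← pow_Lpoly hp E b]
    have hlast : N (Fin.last n) b = (MvPolynomial.X j : R) ^ p ^ (E + (b : ℕ)) := by
      have : g (Fin.last n) = j := by simp [hg]
      simp [hN, this]
    rw [hlast]
    simp [Fin.val_last, mul_assoc]
  rw [Finset.sum_congr rfl fun b _ => hterm b] at hexp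
  rw [Fin.sum_univ_castSucc] at hexp
  simp only [Fin.val_last, Fin.coe_castSucc] at hexp
  have hnn : (-1 : R) ^ (n + n) = 1 := by
    rw [pow_add, ← mul_pow]; norm_num
  rw [hnn, one_mul] at hexp
  have hmain : (MvPolynomial.X j : R) ^ p ^ (E + n) * Lpoly p n n ^ p ^ E =
      -∑ b : Fin n, (-1 : R) ^ (n + (b : ℕ)) *
        ((MvPolynomial.X j : R) ^ p ^ (E + (b : ℕ)) * Lpoly p n (b : ℕ) ^ p ^ E) :=
    ((neg_eq_of_add_eq_zero_right hexp.symm).symm)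
  rw [hmain, ← Finset.sum_neg_distrib,
    ← Fin.sum_univ_eq_sum_range (fun s => (-1 : R) ^ (n + s - 1) *
      Lpoly p n s ^ p ^ E * (MvPolynomial.X j : R) ^ p ^ (E + s)) n]
  refine Finset.sum_congr rfl fun s _ => ?_
  have hq : (-1 : R) ^ (n + (s : ℕ)) = -(-1 : R) ^ (n + (s : ℕ) - 1) := by
    conv_lhs => rw [show n + (s : ℕ) = (n + (s : ℕ) - 1) + 1 from by omega]
    rw [pow_succ]; ring
  rw [hq]
  ring

lemma bracket_key {p n : ℕ} (hp : p.Prime) (hn : 1 ≤ n) (m : ℕ) (e : Fin m → ℕ)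
    (ι : Fin m → Fin n) (t : Fin m) :
    Lpoly p n n ^ p ^ (e t) * bracket p n m (Function.update e t (e t + n)) ι =
      ∑ s ∈ Finset.range n, (-1 : MvPolynomial (Fin n) (ZMod p)) ^ (n + s - 1) *
        Lpoly p n s ^ p ^ (e t) * bracket p n m (Function.update e t (e t + s)) ι := by
  classical
  set R := MvPolynomial (Fin n) (ZMod p)
  set M : Matrix (Fin m) (Fin m) R :=
    Matrix.of (fun a b => (MvPolynomial.X (ι a) : R) ^ p ^ (e b)) with hM
  have hupd : ∀ E : ℕ, bracket p n m (Function.update e t E) ι =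
      Matrix.det (M.updateCol t (fun a => (MvPolynomial.X (ι a) : R) ^ p ^ E)) := by
    intro E
    unfold bracket
    congr 1
    refine Matrix.ext fun a b => ?_
    rw [Matrix.updateCol_apply]
    simp only [Matrix.of_apply, Function.update_apply, hM]
    split <;> rfl
  rw [hupd]
  rw [← Matrix.det_updateCol_smul]
  have hcol : (Lpoly p n n ^ p ^ (e t)) • (fun a => (MvPolynomial.X (ι a) : R) ^ p ^ (e t + n)) =
      fun a => ∑ s ∈ Finset.range n, ((-1 : R) ^ (n + s - 1) * Lpoly p n s ^ p ^ (e t)) *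
        (MvPolynomial.X (ι a) : R) ^ p ^ (e t + s) := by
    funext a
    simp only [Pi.smul_apply, smul_eq_mul]
    rw [mul_comm]
    exact key_scalar hp hn (ι a) (e t)
  rw [hcol, det_updateColumn_finset_sum]
  refine Finset.sum_congr rfl fun s _ => ?_
  rw [show (fun a => ((-1 : R) ^ (n + s - 1) * Lpoly p n s ^ p ^ (e t)) *
      (MvPolynomial.X (ι a) : R) ^ p ^ (e t + s)) =
    ((-1 : R) ^ (n + s - 1) * Lpoly p n s ^ p ^ (e t)) •
      (fun a => (MvPolynomial.X (ι a) : R) ^ p ^ (e t + s)) from rfl]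
  rw [Matrix.det_updateCol_smul, ← hupd, mul_assoc]

noncomputable def muiZ (n k : ℕ) (hk : k ≤ n) (I : Finset (Fin n)) (hI : I.card = k)
    (hIc : Iᶜ.card = n - k) : ℤ :=
  (Equiv.Perm.sign
    ((finCongr (Nat.add_sub_cancel' hk).symm).trans
      (finSumFinEquiv.symm.trans
        ((Equiv.sumCongr (I.orderIsoOfFin hI).toEquiv
          ((Iᶜ.orderIsoOfFin hIc).toEquiv.trans
            (Equiv.subtypeEquivRight fun x => Finset.mem_compl))).trans
          (Equiv.sumCompl (· ∈ I))))) : ℤ)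

noncomputable def muiX (p n k : ℕ) (I : Finset (Fin n)) (hI : I.card = k) : ExtAlg p n :=
  (List.ofFn fun a : Fin k => xgen p n ((I.orderIsoOfFin hI) a)).prod

def muiEmb (n k : ℕ) (I : Finset (Fin n)) (hIc : Iᶜ.card = n - k) : Fin (n - k) → Fin n :=
  fun b => ((Iᶜ.orderIsoOfFin hIc) b : Fin n)

lemma muiBracket_eq {p n k : ℕ} (hk : k ≤ n) (e : Fin (n - k) → ℕ) :
    muiBracket p n k e = ∑ I : Finset (Fin n),
      if hI : I.card = k then
        (muiZ n k hk I hI (by simp [Finset.card_compl, hI])) •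
          (muiX p n k I hI *
            algebraMap (MvPolynomial (Fin n) (ZMod p)) (ExtAlg p n)
              (bracket p n (n - k) e (muiEmb n k I (by simp [Finset.card_compl, hI]))))
      else 0 := rfl

lemma main_aux_s2 {p n k : ℕ} (hp : p.Prime) (hn : 1 ≤ n) (hkn : k ≤ n)
    (e : Fin (n - k) → ℕ) (t : Fin (n - k)) :
    algebraMap (MvPolynomial (Fin n) (ZMod p)) (ExtAlg p n) (Lpoly p n n ^ p ^ (e t)) *
        muiBracket p n k (Function.update e t (e t + n)) =
      ∑ s ∈ Finset.range n,
        (-1 : ExtAlg p n) ^ (n + s - 1) *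
          muiBracket p n k (Function.update e t (e t + s)) *
          algebraMap (MvPolynomial (Fin n) (ZMod p)) (ExtAlg p n) (Lpoly p n s ^ p ^ (e t)) := by
  classical
  set R := MvPolynomial (Fin n) (ZMod p) with hR
  set φ := algebraMap R (ExtAlg p n) with hφ
  simp only [muiBracket_eq hkn, Finset.mul_sum, Finset.sum_mul]
  rw [Finset.sum_comm]
  refine Finset.sum_congr rfl fun I _ => ?_
  by_cases hI : I.card = k
  · simp only [dif_pos hI]
    set z := muiZ n k hkn I hI (by simp [Finset.card_compl, hI]) with hz
    set x := muiX p n k I hI with hx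
    set ι := muiEmb n k I (by simp [Finset.card_compl, hI] : Iᶜ.card = n - k) with hι
    have hpush : ∀ c b l : R, φ c * (x * φ b) * φ l = x * φ (c * l * b) := by
      intro c b l
      rw [Algebra.commutes, mul_assoc, mul_assoc, ← map_mul, ← map_mul]
      exact congrArg (fun r => x * φ r) (by ring)
    have hb : bracket p n (n - k) (Function.update e t (e t + n)) ι *
        Lpoly p n n ^ p ^ (e t) =
        ∑ s ∈ Finset.range n, (-1 : R) ^ (n + s - 1) * Lpoly p n s ^ p ^ (e t) *
          bracket p n (n - k) (Function.update e t (e t + s)) ι := by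
      rw [mul_comm]; exact bracket_key hp hn (n - k) e ι t
    have hL : φ (Lpoly p n n ^ p ^ (e t)) *
        (z • (x * φ (bracket p n (n - k) (Function.update e t (e t + n)) ι))) =
        z • (x * φ (bracket p n (n - k) (Function.update e t (e t + n)) ι *
          Lpoly p n n ^ p ^ (e t))) := by
      rw [mul_smul_comm]
      congr 1
      rw [Algebra.commutes, mul_assoc, ← map_mul]
    rw [hL, hb, map_sum, Finset.mul_sum, Finset.smul_sum]
    refine Finset.sum_congr rfl fun s _ => ?_
    have hc : ((-1 : ExtAlg p n)) ^ (n + s - 1) = φ ((-1 : R) ^ (n + s - 1)) := by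
      simp [hφ]
    rw [mul_smul_comm, smul_mul_assoc, hc, hpush]
  · simp only [dif_neg hI, mul_zero, zero_mul, Finset.sum_const_zero]

/-- Proposition 1.2 of the paper, cleared of denominators: for `0 ≤ k ≤ n−1`,
`L_n^{p^{e_n}} · [k; e_{k+1},…,e_{n−1}, e_n + n]
  = Σ_{s=0}^{n−1} (−1)^{n+s−1} · [k; e_{k+1},…,e_{n−1}, e_n + s] · L_{n,s}^{p^{e_n}}`
in the exterior algebra `A`, where elements of `R` act as scalars via `algebraMap`. -/
theorem statement2 (p n k : ℕ) (hp : p.Prime) (hodd : Odd p) (hn : 1 ≤ n)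
    (hk : k ≤ n - 1) (e : Fin (n - k) → ℕ) :
    algebraMap (MvPolynomial (Fin n) (ZMod p)) (ExtAlg p n)
          (Lpoly p n n ^ p ^ e ⟨n - k - 1, by omega⟩) *
        muiBracket p n k
          (Function.update e ⟨n - k - 1, by omega⟩ (e ⟨n - k - 1, by omega⟩ + n)) =
      ∑ s ∈ Finset.range n,
        (-1 : ExtAlg p n) ^ (n + s - 1) *
          muiBracket p n k
            (Function.update e ⟨n - k - 1, by omega⟩ (e ⟨n - k - 1, by omega⟩ + s)) *
          algebraMap (MvPolynomial (Fin n) (ZMod p)) (ExtAlg p n)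
            (Lpoly p n s ^ p ^ e ⟨n - k - 1, by omega⟩) := by
  exact main_aux_s2 hp hn (by omega) e ⟨n - k - 1, by omega⟩
end

section
/- (The invariant-theoretic identity established in the proof of Theorem 1.3 of the paper, cleared of denominators.) Let 0 ≤ k ≤ n−1 and let 0 ≤ t_1 < t_2 < … < t_{k+1} ≤ n−1 be integers. Let f_1 < … < f_{n−k} be the increasing enumeration of {0,1,…,n} ∖ {t_1,…,t_{k+1}}. Then the identity L_n · [k; f_1,…,f_{n−k}] = Σ_{i=1}^{k+1} (−1)^{k+1−i} · M_{n, t_1,…,t̂_i,…,t_{k+1}} · L_{n,t_i} holds in the exterior algebra A over R, where t̂_i means that t_i is omitted from the list t_1,…,t_{k+1}. (Dividing by L_n, this is the identity [k; 0,…,t̂_1,…,t̂_{k+1},…,n] = Σ_{i=1}^{k+1} (−1)^{k+1−i} M_{n,t_1,…,t̂_i,…,t_{k+1}} Q_{n,t_i} used to compute P^t M_{n,s_1,…,s_k}.) -/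
set_option synthInstance.maxHeartbeats 1000000
set_option maxHeartbeats 1000000

namespace Aux
open MvPolynomial Matrix Finset

lemma bracket_cast (p n : ℕ) {M M' : ℕ} (h : M = M') (e : Fin M → ℕ) (ι : Fin M → Fin n) :
    bracket p n M e ι = bracket p n M' (e ∘ finCongr h.symm) (ι ∘ finCongr h.symm) := by
  subst h; rfl

lemma bracket_perm (p n M : ℕ) (e : Fin M → ℕ) (ι : Fin M → Fin n) (σ : Equiv.Perm (Fin M)) :
    bracket p n M (e ∘ σ) ι = ((Equiv.Perm.sign σ : ℤ) : MvPolynomial (Fin n) (ZMod p)) * bracket p n M e ι := by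
  unfold bracket
  have h : (Matrix.of fun a b : Fin M => (X (ι a) : MvPolynomial (Fin n) (ZMod p)) ^ p ^ (e ∘ σ) b)
      = (Matrix.of fun a b : Fin M => (X (ι a) : MvPolynomial (Fin n) (ZMod p)) ^ p ^ e b).submatrix id σ := rfl
  rw [h, Matrix.det_permute']

lemma bracket_eq_zero (p n M : ℕ) (e : Fin M → ℕ) (ι : Fin M → Fin n) {b1 b2 : Fin M}
    (hne : b1 ≠ b2) (he : e b1 = e b2) : bracket p n M e ι = 0 :=
  Matrix.det_zero_of_column_eq hne (fun a => by simp [he])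

lemma val_succAbove {n : ℕ} (j : Fin (n+1)) (b : Fin n) :
    ((j.succAbove b : Fin (n+1)) : ℕ) = if (b:ℕ) < (j:ℕ) then (b:ℕ) else (b:ℕ)+1 := by
  rcases lt_or_ge ((b:ℕ)) ((j:ℕ)) with h | h
  · rw [Fin.succAbove_of_castSucc_lt _ _ (by simpa [Fin.lt_def] using h)]
    simp [h]
  · rw [Fin.succAbove_of_le_castSucc _ _ (by simpa [Fin.le_def] using h)]
    simp [Nat.not_lt.mpr h]

lemma lemA (p n : ℕ) (r : Fin n) :
    ∑ j : Fin (n+1), (-1 : MvPolynomial (Fin n) (ZMod p)) ^ (j:ℕ) *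
      (MvPolynomial.X r : MvPolynomial (Fin n) (ZMod p)) ^ p ^ (j:ℕ) * Lpoly p n (j:ℕ) = 0 := by
  set M : Matrix (Fin (n+1)) (Fin (n+1)) (MvPolynomial (Fin n) (ZMod p)) :=
    Matrix.of fun a c => (X (Fin.cases r (fun i => i) a) : MvPolynomial (Fin n) (ZMod p)) ^ p ^ (c:ℕ) with hM
  have hdet : M.det = 0 := by
    apply Matrix.det_zero_of_row_eq (i := 0) (j := r.succ) (Fin.succ_ne_zero r).symm
    funext c
    simp [hM]
  rw [Matrix.det_succ_row_zero] at hdet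
  rw [← hdet]
  apply Finset.sum_congr rfl
  intro j _
  have h1 : M 0 j = (X r : MvPolynomial (Fin n) (ZMod p)) ^ p ^ (j:ℕ) := by simp [hM]
  have h2 : (M.submatrix Fin.succ j.succAbove).det = Lpoly p n (j:ℕ) := by
    rw [Lpoly, bracket]
    congr 1
    funext a b
    simp [Matrix.submatrix, hM, val_succAbove]
  rw [h1, h2]

lemma lemB (p n m : ℕ) (ι : Fin (m+1) → Fin n) (W : Fin m → ℕ) :
    ∑ j : Fin (n+1), (-1 : MvPolynomial (Fin n) (ZMod p)) ^ (j:ℕ) *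
      bracket p n (m+1) (Fin.snoc W ((j:ℕ))) ι * Lpoly p n (j:ℕ) = 0 := by
  classical
  let base : Fin (m+1) → (Fin (m+1) → MvPolynomial (Fin n) (ZMod p)) :=
    fun b a => (X (ι a) : MvPolynomial (Fin n) (ZMod p)) ^ p ^ ((Fin.snoc W (0:ℕ) : Fin (m+1) → ℕ) b)
  let v : Fin (n+1) → (Fin (m+1) → MvPolynomial (Fin n) (ZMod p)) :=
    fun j a => (X (ι a) : MvPolynomial (Fin n) (ZMod p)) ^ p ^ (j:ℕ)
  let F := (Matrix.detRowAlternating :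
    (Fin (m+1) → MvPolynomial (Fin n) (ZMod p)) [⋀^Fin (m+1)]→ₗ[MvPolynomial (Fin n) (ZMod p)]
      MvPolynomial (Fin n) (ZMod p))
  have hbr : ∀ j : Fin (n+1), bracket p n (m+1) (Fin.snoc W (j:ℕ)) ι
      = F (Function.update base (Fin.last m) (v j)) := by
    intro j
    have h1 : bracket p n (m+1) (Fin.snoc W (j:ℕ)) ι
        = Matrix.det (Matrix.of fun b a : Fin (m+1) =>
            (X (ι a) : MvPolynomial (Fin n) (ZMod p)) ^ p ^ ((Fin.snoc W (j:ℕ) : Fin (m+1) → ℕ) b)) := by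
      rw [bracket, ← Matrix.det_transpose]; rfl
    rw [h1]
    have h2 : (fun b a : Fin (m+1) =>
            (X (ι a) : MvPolynomial (Fin n) (ZMod p)) ^ p ^ ((Fin.snoc W (j:ℕ) : Fin (m+1) → ℕ) b))
        = Function.update base (Fin.last m) (v j) := by
      funext b
      refine Fin.lastCases ?_ (fun c => ?_) b
      · funext a
        simp [v]
      · rw [Function.update_of_ne (Fin.castSucc_lt_last c).ne]
        funext a
        simp [base]
    show Matrix.det (Matrix.of fun b a => _) = _
    rw [show (Matrix.of fun b a : Fin (m+1) =>
            (X (ι a) : MvPolynomial (Fin n) (ZMod p)) ^ p ^ ((Fin.snoc W (j:ℕ) : Fin (m+1) → ℕ) b))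
        = Matrix.of (Function.update base (Fin.last m) (v j)) from congrArg Matrix.of h2]
    rfl
  have hstep : ∑ j : Fin (n+1), (-1 : MvPolynomial (Fin n) (ZMod p)) ^ (j:ℕ) *
      bracket p n (m+1) (Fin.snoc W ((j:ℕ))) ι * Lpoly p n (j:ℕ)
      = ∑ j : Fin (n+1), F (Function.update base (Fin.last m)
          (((-1 : MvPolynomial (Fin n) (ZMod p)) ^ (j:ℕ) * Lpoly p n (j:ℕ)) • v j)) := by
    refine Finset.sum_congr rfl fun j _ => ?_
    rw [AlternatingMap.map_update_smul, hbr j, smul_eq_mul]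
    ring
  rw [hstep, ← AlternatingMap.map_update_sum]
  have hz : (∑ j : Fin (n+1), ((-1 : MvPolynomial (Fin n) (ZMod p)) ^ (j:ℕ) * Lpoly p n (j:ℕ)) • v j)
      = 0 := by
    funext a
    have h3 : ∀ j : Fin (n+1), (((-1 : MvPolynomial (Fin n) (ZMod p)) ^ (j:ℕ) * Lpoly p n (j:ℕ)) • v j) a
        = (-1 : MvPolynomial (Fin n) (ZMod p)) ^ (j:ℕ) *
            (MvPolynomial.X (ι a) : MvPolynomial (Fin n) (ZMod p)) ^ p ^ (j:ℕ) * Lpoly p n (j:ℕ) := by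
      intro j
      simp only [Pi.smul_apply, smul_eq_mul, v]
      ring
    rw [Finset.sum_apply, Finset.sum_congr rfl (fun j _ => h3 j), lemA p n (ι a)]
    rfl
  rw [hz]
  exact AlternatingMap.map_update_zero F base (Fin.last m)

lemma sign_insert_perm (m : ℕ) (q : Fin (m+1)) :
    Equiv.Perm.sign ((finSuccEquiv' (Fin.last m)).trans (finSuccEquiv' q).symm)
      = (-1) ^ ((q.rev : ℕ)) := by
  have hστ : (Fin.revPerm.trans ((Fin.cycleRange q.rev).trans Fin.revPerm)) *
      ((finSuccEquiv' (Fin.last m)).trans (finSuccEquiv' q).symm) = 1 := by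
    apply Equiv.ext
    intro x
    show Fin.rev (Fin.cycleRange q.rev (Fin.rev ((finSuccEquiv' q).symm (finSuccEquiv' (Fin.last m) x)))) = x
    refine Fin.lastCases ?_ (fun c => ?_) x
    · rw [finSuccEquiv'_at, finSuccEquiv'_symm_none, Fin.cycleRange_self, Fin.rev_zero]
    · rw [finSuccEquiv'_last_apply_castSucc, finSuccEquiv'_symm_some, Fin.rev_succAbove,
        Fin.cycleRange_succAbove, Fin.rev_succ, Fin.rev_rev]
  have hσ : ((finSuccEquiv' (Fin.last m)).trans (finSuccEquiv' q).symm)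
      = (Fin.revPerm.trans ((Fin.cycleRange q.rev).trans Fin.revPerm))⁻¹ :=
    eq_inv_of_mul_eq_one_right hστ
  rw [hσ, Equiv.Perm.sign_inv]
  have h2 : Fin.revPerm.trans ((Fin.cycleRange q.rev).trans Fin.revPerm) =
      Fin.revPerm * Fin.cycleRange q.rev * Fin.revPerm := rfl
  rw [h2, Equiv.Perm.sign_mul, Equiv.Perm.sign_mul, Fin.sign_cycleRange]
  rw [mul_comm (Equiv.Perm.sign Fin.revPerm) ((-1)^(q.rev:ℕ)), mul_assoc, Int.units_mul_self, mul_one]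

lemma strictMono_eq_of_image_eq {m : ℕ} {u v : Fin m → ℕ} (hu : StrictMono u) (hv : StrictMono v)
    (h : Finset.image u Finset.univ = Finset.image v Finset.univ) : u = v := by
  haveI : WellFoundedLT (Fin m) := inferInstance
  apply (hu.range_inj hv).mp
  rw [← Set.image_univ, ← Set.image_univ, ← Finset.coe_univ, ← Finset.coe_image,
    ← Finset.coe_image, h]

lemma card_filter_val_lt (k c : ℕ) (hc : c ≤ k) :
    (Finset.univ.filter fun j : Fin k => (j:ℕ) < c).card = c := by
  classical
  have hmain : (Finset.univ.filter fun j : Fin k => (j:ℕ) < c).card = (Finset.range c).card := by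
    apply Finset.card_bij (fun (j : Fin k) _ => (j:ℕ))
    · intro a ha
      simp only [Finset.mem_filter] at ha
      simpa using ha.2
    · intro a ha b hb hab
      exact Fin.ext hab
    · intro b hb
      simp only [Finset.mem_range] at hb
      refine ⟨⟨b, lt_of_lt_of_le hb hc⟩, ?_, rfl⟩
      simp [hb]
  rw [hmain, Finset.card_range]

lemma le_t_of_strictMono {k : ℕ} (t : Fin (k+1) → ℕ) (ht : StrictMono t) :
    ∀ i : Fin (k+1), (i : ℕ) ≤ t i := by
  intro i
  induction i using Fin.induction with
  | zero => exact Nat.zero_le _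
  | succ j ih =>
      have h1 : t j.castSucc < t j.succ := ht Fin.castSucc_lt_succ
      simp only [Fin.val_succ]
      simp only [Fin.coe_castSucc] at h1 ih
      omega

lemma negOnePow_congr {α : Type*} [Monoid α] [HasDistribNeg α] {a b : ℕ} (h : a % 2 = b % 2) :
    (-1 : α) ^ a = (-1 : α) ^ b := by
  rcases Nat.even_or_odd a with ha | ha
  · have hb : Even b := Nat.even_iff.mpr (by rw [← h]; exact Nat.even_iff.mp ha)
    rw [Even.neg_one_pow ha, Even.neg_one_pow hb]
  · have hb : Odd b := Nat.odd_iff.mpr (by rw [← h]; exact Nat.odd_iff.mp ha)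
    rw [Odd.neg_one_pow ha, Odd.neg_one_pow hb]

lemma polyKey (p n k m : ℕ) (hm : n - k = m + 1) (hkn : k + 1 ≤ n)
    (t : Fin (k + 1) → ℕ) (ht : StrictMono t) (htn : ∀ i, t i ≤ n - 1)
    (f : Fin (n - k) → ℕ) (hf : StrictMono f)
    (hfim : Finset.image f Finset.univ = Finset.range (n + 1) \ Finset.image t Finset.univ)
    (g : Fin (k + 1) → Fin (n - k) → ℕ) (hg : ∀ i, StrictMono (g i))
    (hgim : ∀ i : Fin (k + 1), Finset.image (g i) Finset.univ =
      Finset.range n \ Finset.image (fun j : Fin k => t (i.succAbove j)) Finset.univ)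
    (ι : Fin (n - k) → Fin n) :
    bracket p n (n - k) f ι * Lpoly p n n =
      ∑ i : Fin (k + 1), (-1 : MvPolynomial (Fin n) (ZMod p)) ^ (k - (i : ℕ)) *
        bracket p n (n - k) (g i) ι * Lpoly p n (t i) := by
  classical
  let ε : Fin (m+1) ≃ Fin (n-k) := finCongr hm.symm
  let F : Fin (m+1) → ℕ := f ∘ ε
  let G : Fin (k+1) → Fin (m+1) → ℕ := fun i => g i ∘ ε
  let ι' : Fin (m+1) → Fin n := ι ∘ ε
  have hcastf : bracket p n (n-k) f ι = bracket p n (m+1) F ι' := bracket_cast p n hm f ι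
  have hcastg : ∀ i, bracket p n (n-k) (g i) ι = bracket p n (m+1) (G i) ι' :=
    fun i => bracket_cast p n hm (g i) ι
  have hεmono : StrictMono (ε : Fin (m+1) → Fin (n-k)) := by
    intro a b hab
    rw [Fin.lt_def] at hab ⊢
    simpa [ε] using hab
  have hF : StrictMono F := hf.comp hεmono
  have hG : ∀ i, StrictMono (G i) := fun i => (hg i).comp hεmono
  have himε : ∀ (u : Fin (n-k) → ℕ),
      Finset.image (u ∘ ε) Finset.univ = Finset.image u Finset.univ := by
    intro u
    rw [← Finset.image_image, Finset.image_univ_equiv]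
  have hFim : Finset.image F Finset.univ
      = Finset.range (n + 1) \ Finset.image t Finset.univ := (himε f).trans hfim
  have hn1 : 1 ≤ n := by omega
  have htlt : ∀ i, t i < n := fun i => by have := htn i; omega
  have hnT : (n : ℕ) ∉ Finset.image t Finset.univ := by
    simp only [Finset.mem_image]
    rintro ⟨i, -, hi⟩
    have := htlt i; omega
  have hFle : ∀ c, F c ≤ n := by
    intro c
    have h0 : F c ∈ Finset.image F Finset.univ :=
      Finset.mem_image_of_mem _ (Finset.mem_univ c)
    rw [hFim] at h0
    have h1 := (Finset.mem_sdiff.mp h0).1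
    have := Finset.mem_range.mp h1
    omega
  have hFlast : F (Fin.last m) = n := by
    have hmem : (n:ℕ) ∈ Finset.image F Finset.univ := by
      rw [hFim, Finset.mem_sdiff]
      exact ⟨Finset.mem_range.mpr (by omega), hnT⟩
    obtain ⟨c, -, hc⟩ := Finset.mem_image.mp hmem
    have h1 : F c ≤ F (Fin.last m) := hF.monotone (Fin.le_last c)
    have h2 := hFle (Fin.last m)
    omega
  let W : Fin m → ℕ := fun b => F b.castSucc
  have hW : StrictMono W := by
    intro a b hab
    exact hF (by rw [Fin.lt_def]; simpa using Fin.lt_def.mp hab)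
  have himW : Finset.image W Finset.univ
      = Finset.range n \ Finset.image t Finset.univ := by
    ext x
    simp only [Finset.mem_image, Finset.mem_sdiff, Finset.mem_range, Finset.mem_univ, true_and]
    constructor
    · rintro ⟨b, rfl⟩
      have hlt : W b < n := by
        have h3 := hF (Fin.castSucc_lt_last b)
        rw [hFlast] at h3
        exact h3
      refine ⟨hlt, ?_⟩
      have h4 : W b ∈ Finset.image F Finset.univ :=
        Finset.mem_image_of_mem F (Finset.mem_univ _)
      rw [hFim, Finset.mem_sdiff] at h4
      simpa using h4.2
    · rintro ⟨hx1, hx2⟩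
      have h5 : x ∈ Finset.image F Finset.univ := by
        rw [hFim, Finset.mem_sdiff]
        refine ⟨Finset.mem_range.mpr (by omega), ?_⟩
        simpa using hx2
      obtain ⟨c, -, hc⟩ := Finset.mem_image.mp h5
      have hcne : c ≠ Fin.last m := by
        rintro rfl
        rw [hFlast] at hc
        omega
      refine ⟨c.castPred hcne, ?_⟩
      show F ((c.castPred hcne).castSucc) = x
      rw [Fin.castSucc_castPred]
      exact hc
  have key := lemB p n m ι' W
  let t' : Fin (k+1) → Fin (n+1) := fun i => ⟨t i, by have := htlt i; omega⟩
  let S : Finset (Fin (n+1)) := insert (Fin.last n) (Finset.image t' Finset.univ)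
  let term : Fin (n+1) → MvPolynomial (Fin n) (ZMod p) := fun j =>
    (-1)^(j:ℕ) * bracket p n (m+1) (Fin.snoc W ((j:ℕ))) ι' * Lpoly p n (j:ℕ)
  have hterm : ∀ j : Fin (n+1), term j
      = (-1)^(j:ℕ) * bracket p n (m+1) (Fin.snoc W ((j:ℕ))) ι' * Lpoly p n (j:ℕ) :=
    fun j => rfl
  have hvanish : ∀ j ∈ Finset.univ, j ∉ S → term j = 0 := by
    intro j _ hj
    simp only [S, Finset.mem_insert, Finset.mem_image, Finset.mem_univ, true_and, not_or,
      not_exists] at hj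
    obtain ⟨hj1, hj2⟩ := hj
    have hjn : (j:ℕ) < n := by
      have hjlt := j.isLt
      rcases Nat.lt_or_ge (j:ℕ) n with h|h
      · exact h
      · exfalso
        apply hj1
        apply Fin.ext
        simp only [Fin.val_last]
        omega
    have hjT : (j:ℕ) ∉ Finset.image t Finset.univ := by
      simp only [Finset.mem_image, Finset.mem_univ, true_and]
      rintro ⟨i, hi⟩
      exact hj2 i (Fin.ext (by simpa [t'] using hi))
    have hmem : (j:ℕ) ∈ Finset.image W Finset.univ := by
      rw [himW, Finset.mem_sdiff]
      exact ⟨Finset.mem_range.mpr hjn, hjT⟩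
    obtain ⟨b, -, hb⟩ := Finset.mem_image.mp hmem
    have hz : bracket p n (m+1) (Fin.snoc W ((j:ℕ))) ι' = 0 := by
      apply bracket_eq_zero p n (m+1) _ ι' (b1 := b.castSucc) (b2 := Fin.last m)
        (Fin.castSucc_lt_last b).ne
      rw [Fin.snoc_castSucc, Fin.snoc_last, hb]
    rw [hterm, hz, mul_zero, zero_mul]
  have hsum0 : ∑ j ∈ S, term j = 0 := by
    rw [Finset.sum_subset (Finset.subset_univ S) hvanish]
    exact key
  have hlastS : Fin.last n ∉ Finset.image t' Finset.univ := by
    simp only [Finset.mem_image, Finset.mem_univ, true_and]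
    rintro ⟨i, hi⟩
    have h6 : ((t' i : Fin (n+1)) : ℕ) = n := by rw [hi]; simp
    have := htlt i
    simp only [t'] at h6
    omega
  have ht'inj : Function.Injective t' := by
    intro a b hab
    have h7 : t a = t b := congrArg Fin.val hab
    exact ht.injective h7
  have hsum1 : term (Fin.last n) + ∑ i : Fin (k+1), term (t' i) = 0 := by
    rw [← hsum0]
    show _ = ∑ j ∈ insert (Fin.last n) (Finset.image t' Finset.univ), term j
    rw [Finset.sum_insert hlastS, Finset.sum_image (fun a _ b _ h => ht'inj h)]
  have hterm_last : term (Fin.last n)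
      = (-1)^n * (bracket p n (m+1) F ι' * Lpoly p n n) := by
    have h1 : Fin.snoc W (((Fin.last n : Fin (n+1)) : ℕ)) = F := by
      funext b
      refine Fin.lastCases ?_ (fun c => ?_) b
      · rw [Fin.snoc_last, hFlast]
        simp
      · rw [Fin.snoc_castSucc]
    rw [hterm, h1]
    simp only [Fin.val_last]
    ring
  have hterm_t : ∀ i : Fin (k+1), term (t' i) =
      (-1)^(n+1) * ((-1)^(k - (i:ℕ)) * bracket p n (m+1) (G i) ι' * Lpoly p n (t i)) := by
    intro i
    have hGiim : Finset.image (G i) Finset.univ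
        = Finset.range n \ Finset.image (fun j : Fin k => t (i.succAbove j)) Finset.univ :=
      (himε (g i)).trans (hgim i)
    have htiT : t i ∉ Finset.image (fun j : Fin k => t (i.succAbove j)) Finset.univ := by
      simp only [Finset.mem_image, Finset.mem_univ, true_and]
      rintro ⟨j, hj⟩
      exact Fin.succAbove_ne i j (ht.injective hj)
    have hti_mem : t i ∈ Finset.image (G i) Finset.univ := by
      rw [hGiim, Finset.mem_sdiff]
      exact ⟨Finset.mem_range.mpr (htlt i), htiT⟩
    obtain ⟨q, -, hq⟩ := Finset.mem_image.mp hti_mem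
    have hTsplit : ∀ x, (x ∈ Finset.image t Finset.univ) ↔ (x = t i ∨
        x ∈ Finset.image (fun j : Fin k => t (i.succAbove j)) Finset.univ) := by
      intro x
      simp only [Finset.mem_image, Finset.mem_univ, true_and]
      constructor
      · rintro ⟨jj, hjj⟩
        by_cases hji : jj = i
        · left; rw [← hjj, hji]
        · right
          obtain ⟨j', hj'⟩ := Fin.exists_succAbove_eq hji
          exact ⟨j', by rw [hj', hjj]⟩
      · rintro (rfl | ⟨j', hj'⟩)
        · exact ⟨i, rfl⟩
        · exact ⟨i.succAbove j', hj'⟩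
    have hsucc_im : Finset.image (fun b => G i (q.succAbove b)) Finset.univ
        = Finset.image W Finset.univ := by
      have h1 : Finset.image (fun b => G i (q.succAbove b)) Finset.univ
          = (Finset.image (G i) Finset.univ).erase (t i) := by
        ext x
        simp only [Finset.mem_image, Finset.mem_erase, Finset.mem_univ, true_and]
        constructor
        · rintro ⟨b, rfl⟩
          refine ⟨?_, ⟨q.succAbove b, rfl⟩⟩
          intro hx
          exact Fin.succAbove_ne q b ((hG i).injective (hx.trans hq.symm))
        · rintro ⟨hxne, c, rfl⟩
          have hcq : c ≠ q := by
            rintro rfl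
            exact hxne hq
          obtain ⟨b, hb⟩ := Fin.exists_succAbove_eq hcq
          exact ⟨b, by rw [hb]⟩
      rw [h1, hGiim, himW]
      ext x
      simp only [Finset.mem_erase, Finset.mem_sdiff, Finset.mem_range]
      constructor
      · rintro ⟨hne, hlt, hni⟩
        exact ⟨hlt, fun hx => ((hTsplit x).mp hx).elim hne hni⟩
      · rintro ⟨hlt, hnx⟩
        exact ⟨fun h => hnx ((hTsplit x).mpr (Or.inl h)), hlt,
          fun h => hnx ((hTsplit x).mpr (Or.inr h))⟩
    have hWq : W = fun b => G i (q.succAbove b) :=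
      strictMono_eq_of_image_eq hW ((hG i).comp (Fin.strictMono_succAbove q)) hsucc_im.symm
    set σ : Equiv.Perm (Fin (m+1)) := (finSuccEquiv' (Fin.last m)).trans (finSuccEquiv' q).symm
      with hσdef
    have hsnoc : Fin.snoc W (((t' i : Fin (n+1)) : ℕ)) = (G i) ∘ σ := by
      funext x
      refine Fin.lastCases ?_ (fun c => ?_) x
      · rw [Fin.snoc_last]
        show (t i : ℕ) = G i (σ (Fin.last m))
        have h8 : σ (Fin.last m) = q := by
          rw [hσdef]
          simp only [Equiv.trans_apply]
          rw [finSuccEquiv'_at, finSuccEquiv'_symm_none]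
        rw [h8, hq]
      · rw [Fin.snoc_castSucc]
        show W c = G i (σ c.castSucc)
        have h9 : σ c.castSucc = q.succAbove c := by
          rw [hσdef]
          simp only [Equiv.trans_apply]
          rw [finSuccEquiv'_last_apply_castSucc, finSuccEquiv'_symm_some]
        rw [h9, hWq]
    have hqle : (q:ℕ) ≤ m := Nat.lt_succ_iff.mp q.isLt
    have hilek : (i:ℕ) ≤ k := Nat.lt_succ_iff.mp i.isLt
    have hile : (i:ℕ) ≤ t i := le_t_of_strictMono t ht i
    have hqval : (q:ℕ) = t i - (i:ℕ) := by
      have h1 : Finset.Iio q = Finset.univ.filter (fun j => G i j < t i) := by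
        ext j
        simp only [Finset.mem_Iio, Finset.mem_filter, Finset.mem_univ, true_and]
        rw [← hq]
        exact ⟨fun h => hG i h, fun h => (hG i).lt_iff_lt.mp h⟩
      have h2 : (q:ℕ) = (Finset.univ.filter (fun j => G i j < t i)).card := by
        rw [← h1, Fin.card_Iio]
      have h3 : (Finset.univ.filter (fun j => G i j < t i)).card
          = ((Finset.image (G i) Finset.univ).filter (fun x => x < t i)).card := by
        rw [Finset.filter_image, Finset.card_image_of_injective _ (hG i).injective]
      have h4 : (Finset.image (G i) Finset.univ).filter (fun x => x < t i)
          = Finset.range (t i) \ Finset.image (fun j : Fin k => t (i.succAbove j)) Finset.univ := by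
        rw [hGiim]
        ext x
        simp only [Finset.mem_filter, Finset.mem_sdiff, Finset.mem_range]
        constructor
        · rintro ⟨⟨h5, h6⟩, h7⟩
          exact ⟨h7, h6⟩
        · rintro ⟨h5, h6⟩
          have := htlt i
          exact ⟨⟨by omega, h6⟩, h5⟩
      have h5 : (Finset.range (t i) \
          Finset.image (fun j : Fin k => t (i.succAbove j)) Finset.univ).card = t i - (i:ℕ) := by
        have e1 : Finset.range (t i) \ Finset.image (fun j : Fin k => t (i.succAbove j)) Finset.univ
            = Finset.range (t i) \
              ((Finset.image (fun j : Fin k => t (i.succAbove j)) Finset.univ) ∩ Finset.range (t i)) := by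
          ext y
          simp only [Finset.mem_sdiff, Finset.mem_inter, Finset.mem_range]
          tauto
        rw [e1, Finset.card_sdiff_of_subset Finset.inter_subset_right, Finset.card_range]
        have e2 : (Finset.image (fun j : Fin k => t (i.succAbove j)) Finset.univ) ∩ Finset.range (t i)
            = Finset.image (fun j : Fin k => t (i.succAbove j))
                (Finset.univ.filter (fun j : Fin k => (j:ℕ) < (i:ℕ))) := by
          ext x
          simp only [Finset.mem_inter, Finset.mem_image, Finset.mem_range, Finset.mem_filter,
            Finset.mem_univ, true_and]
          constructor
          · rintro ⟨⟨j, rfl⟩, hlt⟩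
            refine ⟨j, ?_, rfl⟩
            have h7 : i.succAbove j < i := ht.lt_iff_lt.mp hlt
            have h7v := Fin.lt_def.mp h7
            have hval := val_succAbove i j
            rw [hval] at h7v
            split_ifs at h7v with h9
            · exact h9
            · omega
          · rintro ⟨j, hji, rfl⟩
            refine ⟨⟨j, rfl⟩, ?_⟩
            have h9 : i.succAbove j < i := by
              rw [Fin.lt_def, val_succAbove]
              simp only [if_pos hji]
              exact hji
            exact ht h9
        have hinj2 : Function.Injective (fun j : Fin k => t (i.succAbove j)) :=
          fun a b hab => Fin.succAbove_right_injective (ht.injective hab)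
        rw [e2, Finset.card_image_of_injective _ hinj2, card_filter_val_lt k (i:ℕ) hilek]
      rw [h2, h3, h4]
      exact h5
    have hrev : ((q.rev : Fin (m+1)) : ℕ) = m - (t i - (i:ℕ)) := by
      rw [Fin.val_rev]
      omega
    have hbr : bracket p n (m+1) (Fin.snoc W (((t' i : Fin (n+1)) : ℕ))) ι'
        = (-1)^(m - ((t i) - (i:ℕ))) * bracket p n (m+1) (G i) ι' := by
      rw [hsnoc, bracket_perm p n (m+1) (G i) ι' σ, sign_insert_perm m q]
      congr 1
      rw [← hrev]
      push_cast
      ring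
    have htival : ((t' i : Fin (n+1)) : ℕ) = t i := rfl
    calc term (t' i)
        = (-1:MvPolynomial (Fin n) (ZMod p))^(t i) *
            ((-1)^(m - (t i - (i:ℕ))) * bracket p n (m+1) (G i) ι') * Lpoly p n (t i) := by
          rw [hterm, htival, hbr]
      _ = ((-1:MvPolynomial (Fin n) (ZMod p))^(t i + (m - (t i - (i:ℕ))))) *
            (bracket p n (m+1) (G i) ι' * Lpoly p n (t i)) := by
          rw [pow_add]; ring
      _ = ((-1:MvPolynomial (Fin n) (ZMod p))^((n+1) + (k - (i:ℕ)))) *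
            (bracket p n (m+1) (G i) ι' * Lpoly p n (t i)) := by
          rw [negOnePow_congr (by omega : (t i + (m - (t i - (i:ℕ)))) % 2 = ((n+1) + (k - (i:ℕ))) % 2)]
      _ = (-1)^(n+1) * ((-1)^(k - (i:ℕ)) * bracket p n (m+1) (G i) ι' * Lpoly p n (t i)) := by
          rw [pow_add]; ring
  rw [hterm_last, Finset.sum_congr rfl (fun i _ => hterm_t i), ← Finset.mul_sum] at hsum1
  rw [hcastf]
  have hcgs : ∑ i : Fin (k+1), (-1:MvPolynomial (Fin n) (ZMod p))^(k-(i:ℕ)) *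
        bracket p n (n-k) (g i) ι * Lpoly p n (t i)
      = ∑ i : Fin (k+1), (-1:MvPolynomial (Fin n) (ZMod p))^(k-(i:ℕ)) *
        bracket p n (m+1) (G i) ι' * Lpoly p n (t i) :=
    Finset.sum_congr rfl (fun i _ => by rw [hcastg i])
  rw [hcgs]
  have hu : ((-1:MvPolynomial (Fin n) (ZMod p))^n) * ((-1:MvPolynomial (Fin n) (ZMod p))^n) = 1 := by
    rw [← pow_add, negOnePow_congr (show (n+n)%2 = 0%2 by omega), pow_zero]
  have hpow : ((-1:MvPolynomial (Fin n) (ZMod p))^(n+1)) = -((-1:MvPolynomial (Fin n) (ZMod p))^n) := by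
    rw [pow_succ]; ring
  rw [hpow] at hsum1
  linear_combination ((-1:MvPolynomial (Fin n) (ZMod p))^n) * hsum1 +
    ((∑ i : Fin (k+1), (-1:MvPolynomial (Fin n) (ZMod p))^(k-(i:ℕ)) *
        bracket p n (m+1) (G i) ι' * Lpoly p n (t i)) -
      bracket p n (m+1) F ι' * Lpoly p n n) * hu

end Aux

lemma alg_aux {R A : Type*} [CommRing R] [Ring A] [Algebra R A] (x : A) (z : ℤ)
    (L bf : R) {ι₂ : Type*} (s : Finset ι₂) (c Lt bg : ι₂ → R)
    (hkey : bf * L = ∑ i ∈ s, c i * bg i * Lt i) :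
    algebraMap R A L * (z • (x * algebraMap R A bf)) =
      ∑ i ∈ s, algebraMap R A (c i) * (z • (x * algebraMap R A (bg i))) * algebraMap R A (Lt i) := by
  have h1 : algebraMap R A L * (z • (x * algebraMap R A bf))
      = z • (x * algebraMap R A (bf * L)) := by
    rw [mul_smul_comm, map_mul]
    congr 1
    rw [Algebra.commutes, mul_assoc]
  rw [h1, hkey, map_sum, Finset.mul_sum, Finset.smul_sum]
  refine Finset.sum_congr rfl fun i _ => ?_
  have h2 : c i * bg i * Lt i = bg i * c i * Lt i := by ring
  rw [h2, map_mul, map_mul, mul_smul_comm, smul_mul_assoc]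
  rw [Algebra.commutes (c i) (x * algebraMap R A (bg i))]
  simp only [mul_assoc]

/-- The identity from the proof of Theorem 1.3, cleared of denominators.
For `0 ≤ k ≤ n−1` and `0 ≤ t_1 < … < t_{k+1} ≤ n−1`, with `f_1 < … < f_{n−k}` the
increasing enumeration of `{0,…,n} ∖ {t_1,…,t_{k+1}}` and, for each `i`,
`g^{(i)}_1 < … < g^{(i)}_{n−k}` the increasing enumeration of
`{0,…,n−1} ∖ {t_1,…,t̂_i,…,t_{k+1}}` (so that `M_{n,t_1,…,t̂_i,…,t_{k+1}}` is the Mùi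
bracket `[k; g^{(i)}]`), one has
`L_n · [k; f_1,…,f_{n−k}] = Σ_{i=1}^{k+1} (−1)^{k+1−i} · M_{n,t_1,…,t̂_i,…,t_{k+1}} · L_{n,t_i}`
in the exterior algebra `A`.  (With `i` running over `Fin (k+1)`, the exponent
`k+1−i` of the 1-based indexing becomes `k − i`.) -/
theorem statement4 (p n k : ℕ) (hp : p.Prime) (hodd : Odd p) (hn : 1 ≤ n)
    (hk : k ≤ n - 1) (t : Fin (k + 1) → ℕ) (ht : StrictMono t)
    (htn : ∀ i, t i ≤ n - 1)
    (f : Fin (n - k) → ℕ) (hf : StrictMono f)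
    (hfim : Finset.image f Finset.univ =
      Finset.range (n + 1) \ Finset.image t Finset.univ)
    (g : Fin (k + 1) → Fin (n - k) → ℕ) (hg : ∀ i, StrictMono (g i))
    (hgim : ∀ i : Fin (k + 1), Finset.image (g i) Finset.univ =
      Finset.range n \ Finset.image (fun j : Fin k => t (i.succAbove j)) Finset.univ) :
    algebraMap (MvPolynomial (Fin n) (ZMod p)) (ExtAlg p n) (Lpoly p n n) *
        muiBracket p n k f =
      ∑ i : Fin (k + 1),
        (-1 : ExtAlg p n) ^ (k - (i : ℕ)) * muiBracket p n k (g i) *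
          algebraMap (MvPolynomial (Fin n) (ZMod p)) (ExtAlg p n) (Lpoly p n (t i)) := by
  classical
  have hkn : k + 1 ≤ n := by omega
  obtain ⟨m, hm⟩ : ∃ m, n - k = m + 1 := ⟨n - k - 1, by omega⟩
  let D : (Fin (n - k) → ℕ) → Finset (Fin n) → ExtAlg p n := fun e I =>
    if hI : I.card = k then
      have hk : k ≤ n := by
        have h1 := Finset.card_le_univ I
        rw [hI, Fintype.card_fin] at h1
        exact h1
      have hIc : Iᶜ.card = n - k := by
        simp [Finset.card_compl, hI]
      ((Equiv.Perm.sign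
        ((finCongr (Nat.add_sub_cancel' hk).symm).trans
          (finSumFinEquiv.symm.trans
            ((Equiv.sumCongr (I.orderIsoOfFin hI).toEquiv
              ((Iᶜ.orderIsoOfFin hIc).toEquiv.trans
                (Equiv.subtypeEquivRight fun x => Finset.mem_compl))).trans
              (Equiv.sumCompl (· ∈ I)))))) : ℤ) •
      ((List.ofFn fun a : Fin k => xgen p n ((I.orderIsoOfFin hI) a)).prod *
        algebraMap (MvPolynomial (Fin n) (ZMod p)) (ExtAlg p n)
          (bracket p n (n - k) e fun b => ((Iᶜ.orderIsoOfFin hIc) b : Fin n)))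
    else 0
  have hmui : ∀ e : Fin (n - k) → ℕ, muiBracket p n k e = ∑ I : Finset (Fin n), D e I :=
    fun e => rfl
  rw [hmui f, Finset.mul_sum]
  have hR : (∑ i : Fin (k + 1), (-1 : ExtAlg p n) ^ (k - (i : ℕ)) * muiBracket p n k (g i) *
        algebraMap (MvPolynomial (Fin n) (ZMod p)) (ExtAlg p n) (Lpoly p n (t i)))
      = ∑ i : Fin (k + 1), ∑ I : Finset (Fin n), (-1 : ExtAlg p n) ^ (k - (i : ℕ)) * D (g i) I *
        algebraMap (MvPolynomial (Fin n) (ZMod p)) (ExtAlg p n) (Lpoly p n (t i)) := by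
    refine Finset.sum_congr rfl fun i _ => ?_
    rw [hmui (g i), Finset.mul_sum, Finset.sum_mul]
  rw [hR, Finset.sum_comm]
  refine Finset.sum_congr rfl fun I _ => ?_
  by_cases hI : I.card = k
  · simp only [D, dif_pos hI]
    have hneg : ∀ e : ℕ, ((-1 : ExtAlg p n))^e
        = algebraMap (MvPolynomial (Fin n) (ZMod p)) (ExtAlg p n)
            ((-1 : MvPolynomial (Fin n) (ZMod p))^e) := by
      intro e
      rw [map_pow, map_neg, map_one]
    simp only [hneg]
    have hIc : Iᶜ.card = n - k := by
      simp [Finset.card_compl, hI]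
    exact alg_aux _ _ _ _ Finset.univ _ _ _
      (Aux.polyKey p n k m hm hkn t ht htn f hf hfim g hg hgim
        (fun b => ((Iᶜ.orderIsoOfFin hIc) b : Fin n)))
  · simp only [D, dif_neg hI]
    simp
end

section
/- (Coefficientwise form of the identity from the proof of Theorem 1.3 of the paper.) Let 0 ≤ k ≤ n−1, let 0 ≤ t_1 < … < t_{k+1} ≤ n−1 be integers, and let I' be any (n−k)-element subset of {1,…,n}. Let f_1 < … < f_{n−k} be the increasing enumeration of {0,1,…,n} ∖ {t_1,…,t_{k+1}}, and for each 1 ≤ i ≤ k+1 let g^{(i)}_1 < … < g^{(i)}_{n−k} be the increasing enumeration of {0,1,…,n−1} ∖ {t_1,…,t̂_i,…,t_{k+1}} (t_i omitted from the removed set). Then the identity L_n · [f_1,…,f_{n−k}]_{I'} = Σ_{i=1}^{k+1} (−1)^{k+1−i} · [g^{(i)}_1,…,g^{(i)}_{n−k}]_{I'} · L_{n,t_i} holds in R = 𝔽_p[y_1,…,y_n]. -/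
open MvPolynomial Matrix Finset

section helpers

lemma aux_prod_X_pow {n : ℕ} {F : Type*} [CommSemiring F] (σ : Equiv.Perm (Fin n)) (c : Fin n → ℕ) :
    (∏ i, (X (σ i) : MvPolynomial (Fin n) F) ^ c i) =
      monomial (∑ i, Finsupp.single (σ i) (c i)) 1 := by
  rw [monomial_sum_one]
  simp [X_pow_eq_monomial]

lemma aux_det_ne_zero {p n : ℕ} (hp : 1 < p) [Nontrivial (ZMod p)] (e : Fin n → ℕ)
    (he : Function.Injective e) :
    Matrix.det (Matrix.of fun a b : Fin n =>
      (X a : MvPolynomial (Fin n) (ZMod p)) ^ p ^ e b) ≠ 0 := by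
  intro h0
  have key : MvPolynomial.coeff (∑ i, Finsupp.single i (p ^ e i))
      (Matrix.det (Matrix.of fun a b : Fin n =>
        (X a : MvPolynomial (Fin n) (ZMod p)) ^ p ^ e b)) = 1 := by
    rw [Matrix.det_apply]
    rw [MvPolynomial.coeff_sum]
    have hterm : ∀ σ : Equiv.Perm (Fin n),
        MvPolynomial.coeff (∑ i, Finsupp.single i (p ^ e i))
          (Equiv.Perm.sign σ • ∏ i, (Matrix.of fun a b : Fin n =>
            (X a : MvPolynomial (Fin n) (ZMod p)) ^ p ^ e b) (σ i) i)
          = if σ = 1 then 1 else 0 := by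
      intro σ
      have : (∏ i, (Matrix.of fun a b : Fin n =>
          (X a : MvPolynomial (Fin n) (ZMod p)) ^ p ^ e b) (σ i) i)
          = monomial (∑ i, Finsupp.single (σ i) (p ^ e i)) 1 := by
        rw [← aux_prod_X_pow σ (fun i => p ^ e i)]
        rfl
      rw [this, MvPolynomial.coeff_smul, MvPolynomial.coeff_monomial]
      rcases eq_or_ne σ 1 with rfl | hσ
      · simp
      · rw [if_neg, if_neg hσ, smul_zero]
        intro heq
        apply hσ
        have happ : ∀ j : Fin n, p ^ e (σ.symm j) = p ^ e j := by
          intro j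
          have h1 := DFunLike.congr_fun heq j
          have e1 : (∑ i, Finsupp.single (σ i) (p ^ e i)) j = p ^ e (σ.symm j) := by
            rw [Finsupp.finset_sum_apply]
            rw [Finset.sum_eq_single (σ.symm j)]
            · simp
            · intro b _ hb
              rw [Finsupp.single_apply, if_neg]
              intro hc; apply hb; rw [← hc]; simp
            · simp
          have e2 : (∑ i, Finsupp.single i (p ^ e i)) j = p ^ e j := by
            rw [Finsupp.finset_sum_apply]
            rw [Finset.sum_eq_single j]
            · simp
            · intro b _ hb; rw [Finsupp.single_apply, if_neg hb]
            · simp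
          rw [e1, e2] at h1
          exact h1
        ext j
        have h2 : σ.symm j = j := he (Nat.pow_right_injective hp (happ j))
        conv_lhs => rw [← h2]
        simp
    rw [Finset.sum_congr rfl (fun σ _ => hterm σ)]
    simp
  rw [h0] at key
  simp at key

lemma aux_det_insert {R : Type*} [CommRing R] {m : ℕ} (U G : Matrix (Fin m) (Fin m) R) (q : Fin m)
    (h1 : ∀ b : Fin m, b < q → G b = U b)
    (h2 : G q = U ⟨m - 1, Nat.sub_lt q.pos Nat.one_pos⟩)
    (h3 : ∀ b : Fin m, q < b → G b = U ⟨(b : ℕ) - 1, lt_of_le_of_lt (Nat.sub_le _ _) b.isLt⟩) :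
    U.det = (-1 : R) ^ (m - 1 - (q : ℕ)) * G.det := by
  rcases m with - | m
  · exact absurd q.isLt (by omega)
  set τ : Equiv.Perm (Fin (m + 1)) :=
    Fin.revPerm.trans ((Fin.cycleRange q.rev).trans Fin.revPerm) with hτdef
  have hτ : ∀ b, G b = U (τ b) := by
    intro b
    rcases lt_trichotomy b q with hb | rfl | hb
    · have : τ b = b := by
        show Fin.rev (Fin.cycleRange q.rev (Fin.rev b)) = b
        rw [Fin.cycleRange_of_gt (by rwa [Fin.rev_lt_rev])]
        exact Fin.rev_rev b
      rw [this]; exact h1 b hb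
    · have : τ b = ⟨m + 1 - 1, Nat.sub_lt b.pos Nat.one_pos⟩ := by
        show Fin.rev (Fin.cycleRange b.rev (Fin.rev b)) = _
        rw [Fin.cycleRange_self]
        ext
        simp [Fin.val_rev]
      rw [this]; exact h2
    · have : τ b = ⟨(b : ℕ) - 1, lt_of_le_of_lt (Nat.sub_le _ _) b.isLt⟩ := by
        show Fin.rev (Fin.cycleRange q.rev (Fin.rev b)) = _
        rw [Fin.cycleRange_of_lt (by rwa [Fin.rev_lt_rev])]
        have hwrap : ((Fin.rev b + 1 : Fin (m + 1)) : ℕ) = (Fin.rev b : ℕ) + 1 := by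
          apply Fin.val_add_one_of_lt
          exact lt_of_lt_of_le (by rwa [Fin.rev_lt_rev]) (Fin.le_last _)
        have hb1 : 1 ≤ (b : ℕ) := by
          have : (q : ℕ) < (b : ℕ) := hb
          omega
        have hbm := b.isLt
        have hval : ((Fin.rev (Fin.rev b + 1)) : ℕ) = (b : ℕ) - 1 := by
          rw [Fin.val_rev, hwrap, Fin.val_rev]
          omega
        exact Fin.ext hval
      rw [this]; exact h3 b hb
  have hG : G = U.submatrix τ id := by
    ext b j; rw [hτ b]; rfl
  have hsign : Equiv.Perm.sign τ = (-1 : ℤˣ) ^ (m - (q : ℕ)) := by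
    have : τ = Fin.revPerm * Fin.cycleRange q.rev * Fin.revPerm := rfl
    rw [this, _root_.map_mul, _root_.map_mul, Fin.sign_cycleRange]
    have hrev : ((Fin.rev q : Fin (m + 1)) : ℕ) = m - (q : ℕ) := by
      rw [Fin.val_rev]; omega
    rw [hrev]
    rcases Int.units_eq_one_or (Equiv.Perm.sign (Fin.revPerm : Equiv.Perm (Fin (m + 1)))) with h | h <;>
      rw [h]
    · rw [one_mul, mul_one]
    · rw [mul_comm, ← mul_assoc, Int.units_mul_self, one_mul]
  have hdet : G.det = ((-1 : R)) ^ (m - (q : ℕ)) * U.det := by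
    rw [hG, Matrix.det_permute, hsign]
    push_cast
    ring
  rw [hdet]
  have : (m + 1 - 1 - (q : ℕ)) = m - (q : ℕ) := by omega
  rw [this, ← mul_assoc, ← mul_pow]
  simp

/-- linear map given by replacing row `r` of `M` -/
noncomputable def detRowLinearMap {K : Type*} [CommRing K] {s : Type*} [DecidableEq s] [Fintype s]
    (M : Matrix s s K) (r : s) : (s → K) →ₗ[K] K where
  toFun w := (M.updateRow r w).det
  map_add' u v := Matrix.det_updateRow_add M r u v
  map_smul' a u := by simpa using Matrix.det_updateRow_smul M r a u

end helpers

set_option maxHeartbeats 2000000 in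
/-- Coefficientwise form of the identity from the proof of Theorem 1.3.
For `0 ≤ k ≤ n−1`, `0 ≤ t_1 < … < t_{k+1} ≤ n−1`, and any `(n−k)`-element subset `I'`
of `{1,…,n}`, with `f` the increasing enumeration of `{0,…,n} ∖ {t_1,…,t_{k+1}}` and
`g^{(i)}` the increasing enumeration of `{0,…,n−1} ∖ {t_1,…,t̂_i,…,t_{k+1}}`:
`L_n · [f_1,…,f_{n−k}]_{I'} = Σ_{i=1}^{k+1} (−1)^{k+1−i} · [g^{(i)}_1,…,g^{(i)}_{n−k}]_{I'} · L_{n,t_i}`. -/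
theorem statement5 (p n k : ℕ) (hp : p.Prime) (hodd : Odd p) (hn : 1 ≤ n)
    (hk : k ≤ n - 1) (t : Fin (k + 1) → ℕ) (ht : StrictMono t)
    (htn : ∀ i, t i ≤ n - 1)
    (I' : Finset (Fin n)) (hI' : I'.card = n - k)
    (f : Fin (n - k) → ℕ) (hf : StrictMono f)
    (hfim : Finset.image f Finset.univ =
      Finset.range (n + 1) \ Finset.image t Finset.univ)
    (g : Fin (k + 1) → Fin (n - k) → ℕ) (hg : ∀ i, StrictMono (g i))
    (hgim : ∀ i : Fin (k + 1), Finset.image (g i) Finset.univ =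
      Finset.range n \ Finset.image (fun j : Fin k => t (i.succAbove j)) Finset.univ) :
    Lpoly p n n *
        bracket p n (n - k) f (fun b => ((I'.orderIsoOfFin hI') b : Fin n)) =
      ∑ i : Fin (k + 1),
        (-1 : MvPolynomial (Fin n) (ZMod p)) ^ (k - (i : ℕ)) *
          bracket p n (n - k) (g i) (fun b => ((I'.orderIsoOfFin hI') b : Fin n)) *
          Lpoly p n (t i) := by
  haveI : Fact p.Prime := ⟨hp⟩
  have hkn : k < n := by omega
  have hm1 : 1 ≤ n - k := by omega
  set R := MvPolynomial (Fin n) (ZMod p)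
  set K := FractionRing R with hK
  set φ : R →+* K := algebraMap R K with hφdef
  have hφ : Function.Injective φ := IsFractionRing.injective R K
  -- the column vectors
  set v : ℕ → Fin n → K := fun b a => (φ (X a)) ^ p ^ b with hv
  set ι : Fin (n - k) → Fin n := fun b => ((I'.orderIsoOfFin hI') b : Fin n) with hι
  -- mapping brackets to K
  have hmapB : ∀ (m : ℕ) (e : Fin m → ℕ) (ι' : Fin m → Fin n),
      φ (bracket p n m e ι') = (Matrix.of fun b c : Fin m => v (e b) (ι' c)).det := by
    intro m e ι'
    rw [bracket, ← Matrix.det_transpose (Matrix.of fun b c : Fin m => v (e b) (ι' c))]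
    rw [RingHom.map_det]
    congr 1
    ext a b
    simp [Matrix.map_apply, Matrix.transpose_apply, hv]
  -- the exponent functions for the L polynomials
  set en : Fin n → ℕ := fun b => (b : ℕ) with hen
  set ei : Fin (k + 1) → Fin n → ℕ := fun i b => if (b : ℕ) < t i then (b : ℕ) else (b : ℕ) + 1
    with hei
  have henif : (fun j : Fin n => if (j : ℕ) < n then (j : ℕ) else (j : ℕ) + 1) = en :=
    funext fun j => if_pos j.isLt
  have hLn : φ (Lpoly p n n) = (Matrix.of fun b a : Fin n => v (en b) a).det := by
    simp only [Lpoly]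
    rw [henif, hmapB n en id]
    rfl
  have hLt : ∀ i, φ (Lpoly p n (t i)) = (Matrix.of fun b a : Fin n => v (ei i b) a).det := by
    intro i
    simp only [Lpoly]
    rw [hmapB n (fun j : Fin n => if (j : ℕ) < t i then (j : ℕ) else (j : ℕ) + 1) id]
    rfl
  -- nonvanishing of L_n
  have hLn0 : (Matrix.of fun b a : Fin n => v (en b) a).det ≠ 0 := by
    have hnz : Lpoly p n n ≠ 0 := by
      simp only [Lpoly, bracket]
      have heq : (Matrix.of fun a b : Fin n =>
            (X (id a) : MvPolynomial (Fin n) (ZMod p)) ^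
              p ^ (if (b : ℕ) < n then (b : ℕ) else (b : ℕ) + 1))
          = Matrix.of fun a b : Fin n =>
            (X a : MvPolynomial (Fin n) (ZMod p)) ^ p ^ en b := by
        apply Matrix.ext
        intro a b
        show (X (id a) : MvPolynomial (Fin n) (ZMod p)) ^
              p ^ (if (b : ℕ) < n then (b : ℕ) else (b : ℕ) + 1) = _
        rw [if_pos b.isLt]
        rfl
      rw [heq]
      exact aux_det_ne_zero hp.one_lt en Fin.val_injective
    rw [← hLn]
    intro h0
    exact hnz (hφ (by rw [h0, map_zero]))
  -- combinatorial facts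
  have hkn1 : ∀ i, t i < n := fun i => by have := htn i; omega
  have htnotf : ∀ i x, t i ≠ f x := by
    intro i x h
    have hx : f x ∈ Finset.image f Finset.univ := Finset.mem_image_of_mem f (Finset.mem_univ x)
    rw [hfim, Finset.mem_sdiff] at hx
    exact hx.2 (h ▸ Finset.mem_image_of_mem t (Finset.mem_univ i))
  set lastm : Fin (n - k) := ⟨n - k - 1, by omega⟩ with hlastm
  set lastn : Fin n := ⟨n - 1, by omega⟩ with hlastn
  have hfle : ∀ b, f b ≤ n := by
    intro b
    have hx : f b ∈ Finset.image f Finset.univ := Finset.mem_image_of_mem f (Finset.mem_univ b)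
    rw [hfim, Finset.mem_sdiff, Finset.mem_range] at hx
    omega
  have hflast : f lastm = n := by
    have hmem : (n : ℕ) ∈ Finset.image f Finset.univ := by
      rw [hfim, Finset.mem_sdiff, Finset.mem_range]
      refine ⟨by omega, ?_⟩
      rw [Finset.mem_image]
      rintro ⟨i, -, hi⟩
      exact absurd hi (by have := hkn1 i; omega)
    obtain ⟨b, -, hb⟩ := Finset.mem_image.mp hmem
    have h1 : f b ≤ f lastm := hf.monotone (by
      show b ≤ lastm
      rw [Fin.le_def]
      have := b.isLt
      show (b : ℕ) ≤ n - k - 1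
      omega)
    have h2 := hfle lastm
    omega
  have hfmem : ∀ j : ℕ, j < n → (∀ i, t i ≠ j) → ∃ b : Fin (n - k), f b = j ∧ b ≠ lastm := by
    intro j hj hnt
    have hmem : j ∈ Finset.image f Finset.univ := by
      rw [hfim, Finset.mem_sdiff, Finset.mem_range]
      refine ⟨by omega, ?_⟩
      rw [Finset.mem_image]
      rintro ⟨i, -, hi⟩
      exact hnt i hi
    obtain ⟨b, -, hb⟩ := Finset.mem_image.mp hmem
    refine ⟨b, hb, ?_⟩
    intro hbl
    rw [hbl, hflast] at hb
    omega
  -- matrices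
  set A : Matrix (Fin n) (Fin n) K := Matrix.of fun b a : Fin n => v (en b) a with hA
  set SMf : Matrix (Fin (n - k)) (Fin (n - k)) K :=
    Matrix.of fun b c => v (f b) (ι c) with hSMf
  set SMg : Fin (k + 1) → Matrix (Fin (n - k)) (Fin (n - k)) K :=
    fun i => Matrix.of fun b c => v (g i b) (ι c) with hSMg
  set FM : Fin (k + 1) → Matrix (Fin n) (Fin n) K :=
    fun i => Matrix.of fun b a => v (ei i b) a with hFM
  -- the linear functional
  set D : (Fin n → K) →ₗ[K] K :=
    A.det • ((detRowLinearMap SMf lastm).comp (LinearMap.funLeft K K ι))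
    - ∑ i : Fin (k + 1), ((-1 : K) ^ (k - (i : ℕ)) * (SMg i).det) • (detRowLinearMap (FM i) lastn)
    with hD
  have hDval : ∀ w, D w = A.det * (SMf.updateRow lastm (fun c => w (ι c))).det
      - ∑ i : Fin (k + 1), ((-1 : K) ^ (k - (i : ℕ)) * (SMg i).det)
        * ((FM i).updateRow lastn w).det := by
    intro w
    simp [hD, detRowLinearMap, LinearMap.funLeft, smul_eq_mul]
    exact Or.inl rfl
  have hFMzero : ∀ (i : Fin (k + 1)) (j : ℕ), j < n → t i ≠ j →
      ((FM i).updateRow lastn (v j)).det = 0 := by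
    intro i j hj hne
    by_cases hlt : j < t i
    · have hbne : (⟨j, hj⟩ : Fin n) ≠ lastn :=
        Fin.ne_of_val_ne (show j ≠ n - 1 by have := htn i; omega)
      apply Matrix.det_zero_of_row_eq hbne
      rw [Matrix.updateRow_ne hbne, Matrix.updateRow_self]
      funext a
      show v (ei i ⟨j, hj⟩) a = v j a
      have hev : ei i ⟨j, hj⟩ = j := by
        simp only [hei]
        rw [if_pos (show ((⟨j, hj⟩ : Fin n) : ℕ) < t i from hlt)]
      rw [hev]
    · have htj : t i < j := by omega
      have hj1 : j - 1 < n := by omega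
      have hbne : (⟨j - 1, hj1⟩ : Fin n) ≠ lastn :=
        Fin.ne_of_val_ne (show j - 1 ≠ n - 1 by omega)
      apply Matrix.det_zero_of_row_eq hbne
      rw [Matrix.updateRow_ne hbne, Matrix.updateRow_self]
      funext a
      show v (ei i ⟨j - 1, hj1⟩) a = v j a
      have hev : ei i ⟨j - 1, hj1⟩ = j := by
        simp only [hei]
        rw [if_neg (show ¬ ((⟨j - 1, hj1⟩ : Fin n) : ℕ) < t i by
          show ¬ j - 1 < t i; omega)]
        show j - 1 + 1 = j
        omega
      rw [hev]
  have hDzero : ∀ j : ℕ, j < n → D (v j) = 0 := by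
    intro j hj
    rw [hDval]
    by_cases hjT : ∃ i, t i = j
    · obtain ⟨i0, hi0⟩ := hjT
      subst hi0
      -- the insertion position
      set q' : ℕ := (Finset.univ.filter fun b : Fin (n - k) => f b < t i0).card with hq'def
      have hq'lt : q' < n - k := by
        have hsub : (Finset.univ.filter fun b : Fin (n - k) => f b < t i0)
            ⊆ Finset.univ.erase lastm := by
          intro b hb
          rw [Finset.mem_filter] at hb
          rw [Finset.mem_erase]
          refine ⟨?_, Finset.mem_univ _⟩
          intro hc
          rw [hc, hflast] at hb
          have := hkn1 i0
          omega
        have h1 := Finset.card_le_card hsub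
        rw [Finset.card_erase_of_mem (Finset.mem_univ _), Finset.card_univ,
          Fintype.card_fin] at h1
        omega
      set qF : Fin (n - k) := ⟨q', hq'lt⟩ with hqF
      have hlow : ∀ b : Fin (n - k), (b : ℕ) < q' → f b < t i0 := by
        intro b hb
        by_contra hc
        have hsub : (Finset.univ.filter fun c : Fin (n - k) => f c < t i0)
            ⊆ Finset.Iio b := by
          intro c hcs
          rw [Finset.mem_filter] at hcs
          rw [Finset.mem_Iio]
          by_contra hcb
          push_neg at hcb
          exact hc (lt_of_le_of_lt (hf.monotone hcb) hcs.2)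
        have h1 := Finset.card_le_card hsub
        rw [Fin.card_Iio] at h1
        omega
      have hhigh : ∀ b : Fin (n - k), q' ≤ (b : ℕ) → t i0 < f b := by
        intro b hb
        have h1 : ¬ f b < t i0 := by
          intro hc
          have hsub : Finset.Iic b ⊆
              (Finset.univ.filter fun c : Fin (n - k) => f c < t i0) := by
            intro c hcs
            rw [Finset.mem_Iic] at hcs
            rw [Finset.mem_filter]
            exact ⟨Finset.mem_univ c, lt_of_le_of_lt (hf.monotone hcs) hc⟩
          have h2 := Finset.card_le_card hsub
          rw [Fin.card_Iic] at h2
          omega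
        exact lt_of_le_of_ne (not_lt.mp h1) (htnotf i0 b)
      -- q' + i0 = t i0
      have hq'sum : q' + (i0 : ℕ) = t i0 := by
        have himg : Finset.image f (Finset.univ.filter fun b : Fin (n - k) => f b < t i0)
            = Finset.range (t i0) \ Finset.image t Finset.univ := by
          ext x
          simp only [Finset.mem_image, Finset.mem_filter, Finset.mem_univ, true_and,
            Finset.mem_sdiff, Finset.mem_range]
          constructor
          · rintro ⟨b, hblt, hbx⟩
            subst hbx
            refine ⟨hblt, ?_⟩
            rintro ⟨i, hi⟩
            exact htnotf i b hi
          · rintro ⟨hxlt, hx⟩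
            have hxn : x < n := by have := hkn1 i0; omega
            have hxT : ∀ i, t i ≠ x := fun i hc => hx ⟨i, hc⟩
            obtain ⟨b, hb, -⟩ := hfmem x hxn hxT
            exact ⟨b, ⟨by rw [hb]; exact hxlt, hb⟩⟩
        have hcard1 : q' = (Finset.range (t i0) \ Finset.image t Finset.univ).card := by
          rw [← himg, Finset.card_image_of_injective _ hf.injective]
        have hinter : Finset.range (t i0) ∩ Finset.image t Finset.univ
            = Finset.image t (Finset.Iio i0) := by
          ext x
          simp only [Finset.mem_inter, Finset.mem_range, Finset.mem_image, Finset.mem_Iio,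
            Finset.mem_univ, true_and]
          constructor
          · rintro ⟨hxlt, i, rfl⟩
            exact ⟨i, ht.lt_iff_lt.mp hxlt, rfl⟩
          · rintro ⟨i, hii, rfl⟩
            exact ⟨ht hii, ⟨i, rfl⟩⟩
        have hc2 : (Finset.range (t i0) ∩ Finset.image t Finset.univ).card = (i0 : ℕ) := by
          rw [hinter, Finset.card_image_of_injective _ ht.injective, Fin.card_Iio]
        have hc3 := Finset.card_sdiff_add_card_inter (Finset.range (t i0))
          (Finset.image t Finset.univ)
        rw [Finset.card_range, hc2] at hc3
        omega
      -- the explicit description of g i0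
      set G' : Fin (n - k) → ℕ := fun b =>
        if (b : ℕ) < q' then f b
        else if (b : ℕ) = q' then t i0
        else f ⟨(b : ℕ) - 1, lt_of_le_of_lt (Nat.sub_le _ _) b.isLt⟩ with hG'def
      have hG'lo : ∀ b : Fin (n - k), (b : ℕ) < q' → G' b = f b := by
        intro b hb
        simp only [hG'def]
        rw [if_pos hb]
      have hG'eq : ∀ b : Fin (n - k), (b : ℕ) = q' → G' b = t i0 := by
        intro b hb
        simp only [hG'def]
        rw [if_neg (by omega), if_pos hb]
      have hG'hi : ∀ b : Fin (n - k), q' < (b : ℕ) →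
          G' b = f ⟨(b : ℕ) - 1, lt_of_le_of_lt (Nat.sub_le _ _) b.isLt⟩ := by
        intro b hb
        simp only [hG'def]
        rw [if_neg (by omega), if_neg (by omega)]
      have hG'mono : StrictMono G' := by
        intro b c hbc
        have hbc' : (b : ℕ) < (c : ℕ) := hbc
        rcases lt_trichotomy ((c : ℕ)) q' with hc | hc | hc
        · rw [hG'lo b (by omega), hG'lo c hc]
          exact hf hbc
        · rw [hG'lo b (by omega), hG'eq c hc]
          exact hlow b (by omega)
        · rw [hG'hi c hc]
          have hch : t i0 < f ⟨(c : ℕ) - 1, lt_of_le_of_lt (Nat.sub_le _ _) c.isLt⟩ :=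
            hhigh _ (by show q' ≤ (c : ℕ) - 1; omega)
          rcases lt_trichotomy ((b : ℕ)) q' with hb | hb | hb
          · rw [hG'lo b hb]
            exact lt_trans (hlow b hb) hch
          · rw [hG'eq b hb]
            exact hch
          · rw [hG'hi b hb]
            exact hf (show ((⟨(b : ℕ) - 1, _⟩ : Fin (n - k))) < ⟨(c : ℕ) - 1, _⟩ by
              rw [Fin.mk_lt_mk]; omega)
      have hrange : ∀ x : ℕ, (∃ b, g i0 b = x) ↔ (∃ b, G' b = x) := by
        have hmid : ∀ x : ℕ, (x < n ∧ ∀ j : Fin k, t (i0.succAbove j) ≠ x) ↔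
            (∃ b, G' b = x) := by
          intro x
          constructor
          · rintro ⟨hx1, hx2⟩
            by_cases hxt : x = t i0
            · exact ⟨qF, by rw [hG'eq qF rfl, hxt]⟩
            · have hxT : ∀ i, t i ≠ x := by
                intro i
                by_cases hii : i = i0
                · rw [hii]; exact fun hc => hxt hc.symm
                · obtain ⟨j, hj⟩ := Fin.exists_succAbove_eq hii
                  rw [← hj]
                  exact hx2 j
              obtain ⟨b, hb, hbne⟩ := hfmem x hx1 hxT
              by_cases hbq : (b : ℕ) < q'
              · exact ⟨b, by rw [hG'lo b hbq, hb]⟩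
              · have hble : (b : ℕ) < n - k - 1 := by
                  have hv1 := Fin.val_ne_of_ne hbne
                  have hv2 : (lastm : ℕ) = n - k - 1 := rfl
                  have := b.isLt
                  omega
                refine ⟨⟨(b : ℕ) + 1, by omega⟩, ?_⟩
                rw [hG'hi _ (by show q' < (b : ℕ) + 1; omega)]
                have hmk : (⟨(b : ℕ) + 1 - 1, lt_of_le_of_lt (Nat.sub_le _ _)
                    (⟨(b : ℕ) + 1, by omega⟩ : Fin (n - k)).isLt⟩ : Fin (n - k)) = b :=
                  Fin.ext rfl
                rw [hmk, hb]
          · rintro ⟨b, rfl⟩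
            rcases lt_trichotomy ((b : ℕ)) q' with hb | hb | hb
            · rw [hG'lo b hb]
              refine ⟨lt_trans (hlow b hb) (hkn1 i0), fun j hj => htnotf _ b hj⟩
            · rw [hG'eq b hb]
              refine ⟨hkn1 i0, fun j hj => Fin.succAbove_ne i0 j (ht.injective hj)⟩
            · rw [hG'hi b hb]
              set b1 : Fin (n - k) := ⟨(b : ℕ) - 1, lt_of_le_of_lt (Nat.sub_le _ _) b.isLt⟩
              have hb1ne : b1 ≠ lastm := by
                apply Fin.ne_of_val_ne
                show (b : ℕ) - 1 ≠ n - k - 1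
                have := b.isLt
                omega
              have hlt : f b1 < n := by
                have h1 : f b1 ≤ n := hfle b1
                have h2 : f b1 ≠ n := by
                  intro hc
                  exact hb1ne (hf.injective (by rw [hc, hflast]))
                omega
              exact ⟨hlt, fun j hj => htnotf _ b1 hj⟩
        intro x
        rw [← hmid x]
        constructor
        · rintro ⟨b, rfl⟩
          have hx : g i0 b ∈ Finset.image (g i0) Finset.univ :=
            Finset.mem_image_of_mem _ (Finset.mem_univ b)
          rw [hgim i0, Finset.mem_sdiff, Finset.mem_range] at hx
          refine ⟨hx.1, fun j hj => hx.2 ?_⟩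
          rw [Finset.mem_image]
          exact ⟨j, Finset.mem_univ j, hj⟩
        · rintro ⟨hx1, hx2⟩
          have hx : x ∈ Finset.image (g i0) Finset.univ := by
            rw [hgim i0, Finset.mem_sdiff, Finset.mem_range]
            refine ⟨hx1, ?_⟩
            rw [Finset.mem_image]
            rintro ⟨j, -, hj⟩
            exact hx2 j hj
          obtain ⟨b, -, hb⟩ := Finset.mem_image.mp hx
          exact ⟨b, hb⟩
      have hgG : g i0 = G' := by
        apply ((hg i0).range_inj hG'mono).mp
        ext x
        simpa [Set.mem_range] using hrange x
      -- first determinant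
      have hdet1 : (SMf.updateRow lastm fun c => v (t i0) (ι c)).det
          = (-1 : K) ^ (n - k - 1 - ((qF : Fin (n - k)) : ℕ)) * (SMg i0).det := by
        apply aux_det_insert _ (SMg i0) qF
        · intro b hb
          have hbq : (b : ℕ) < q' := hb
          have hbne : b ≠ lastm := Fin.ne_of_val_ne (show (b : ℕ) ≠ n - k - 1 by omega)
          rw [Matrix.updateRow_ne hbne]
          funext c
          show v (g i0 b) (ι c) = v (f b) (ι c)
          rw [hgG, hG'lo b hbq]
        · show SMg i0 qF = (SMf.updateRow lastm fun c => v (t i0) (ι c)) lastm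
          rw [Matrix.updateRow_self]
          funext c
          show v (g i0 qF) (ι c) = v (t i0) (ι c)
          rw [hgG, hG'eq qF rfl]
        · intro b hb
          have hbq : q' < (b : ℕ) := hb
          have hbne : (⟨(b : ℕ) - 1, lt_of_le_of_lt (Nat.sub_le _ _) b.isLt⟩ : Fin (n - k))
              ≠ lastm := by
            apply Fin.ne_of_val_ne
            show (b : ℕ) - 1 ≠ n - k - 1
            have := b.isLt
            omega
          rw [Matrix.updateRow_ne hbne]
          funext c
          show v (g i0 b) (ι c) = v (f ⟨(b : ℕ) - 1, _⟩) (ι c)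
          rw [hgG, hG'hi b hbq]
      -- second determinant
      have hdet2 : ((FM i0).updateRow lastn (v (t i0))).det
          = (-1 : K) ^ (n - 1 - ((⟨t i0, hkn1 i0⟩ : Fin n) : ℕ)) * A.det := by
        apply aux_det_insert _ A (⟨t i0, hkn1 i0⟩ : Fin n)
        · intro b hb
          have hbq : (b : ℕ) < t i0 := hb
          have hbne : b ≠ lastn :=
            Fin.ne_of_val_ne (show (b : ℕ) ≠ n - 1 by have := htn i0; omega)
          rw [Matrix.updateRow_ne hbne]
          funext a
          show v (en b) a = v (ei i0 b) a
          have hev : ei i0 b = en b := by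
            simp only [hei, hen]
            rw [if_pos hbq]
          rw [hev]
        · show A ⟨t i0, hkn1 i0⟩ = ((FM i0).updateRow lastn (v (t i0))) lastn
          rw [Matrix.updateRow_self]
          rfl
        · intro b hb
          have hbq : t i0 < (b : ℕ) := hb
          have hbne : (⟨(b : ℕ) - 1, lt_of_le_of_lt (Nat.sub_le _ _) b.isLt⟩ : Fin n)
              ≠ lastn := by
            apply Fin.ne_of_val_ne
            show (b : ℕ) - 1 ≠ n - 1
            have := b.isLt
            omega
          rw [Matrix.updateRow_ne hbne]
          funext a
          show v (en b) a = v (ei i0 ⟨(b : ℕ) - 1, _⟩) a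
          have hev : ei i0 ⟨(b : ℕ) - 1, lt_of_le_of_lt (Nat.sub_le _ _) b.isLt⟩ = en b := by
            simp only [hei, hen]
            rw [if_neg (show ¬ (b : ℕ) - 1 < t i0 by omega)]
            show (b : ℕ) - 1 + 1 = (b : ℕ)
            omega
          rw [hev]
      rw [hdet1]
      rw [Finset.sum_eq_single_of_mem i0 (Finset.mem_univ i0) ?_]
      · rw [hdet2]
        have hsigns : ((-1 : K)) ^ (n - k - 1 - ((qF : Fin (n - k)) : ℕ))
            = (-1 : K) ^ (k - (i0 : ℕ)) * (-1 : K) ^ (n - 1 - ((⟨t i0, hkn1 i0⟩ : Fin n) : ℕ)) := by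
          have h1 := htn i0
          have h2 : (i0 : ℕ) < k + 1 := i0.isLt
          have hmod : (n - k - 1 - ((qF : Fin (n - k)) : ℕ)) % 2
              = (k - (i0 : ℕ) + (n - 1 - ((⟨t i0, hkn1 i0⟩ : Fin n) : ℕ))) % 2 := by
            show (n - k - 1 - q') % 2 = (k - (i0 : ℕ) + (n - 1 - t i0)) % 2
            omega
          rw [← pow_add, neg_one_pow_eq_pow_mod_two, hmod, ← neg_one_pow_eq_pow_mod_two]
        rw [hsigns]
        ring
      · intro i _ hii
        rw [hFMzero i (t i0) (hkn1 i0) (fun hc => hii (ht.injective hc)), mul_zero]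
    · push_neg at hjT
      have h1 : (SMf.updateRow lastm fun c => v j (ι c)).det = 0 := by
        obtain ⟨b, hb, hbne⟩ := hfmem j hj hjT
        apply Matrix.det_zero_of_row_eq hbne
        rw [Matrix.updateRow_ne hbne, Matrix.updateRow_self]
        funext c
        show v (f b) (ι c) = v j (ι c)
        rw [hb]
      rw [h1, mul_zero, zero_sub, neg_eq_zero]
      apply Finset.sum_eq_zero
      intro i _
      rw [hFMzero i j hj (hjT i), mul_zero]
  -- v n is a combination of the rows of A
  have hvn : D (v n) = 0 := by
    have hunit : IsUnit A.det := by
      rw [isUnit_iff_ne_zero]; exact hLn0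
    set c : Fin n → K := Matrix.vecMul (v n) A⁻¹ with hc
    have hcomb : v n = ∑ j : Fin n, c j • A j := by
      have h1 : Matrix.vecMul c A = v n := by
        rw [hc, Matrix.vecMul_vecMul, Matrix.nonsing_inv_mul A hunit, Matrix.vecMul_one]
      rw [← h1]
      funext a
      simp [Matrix.vecMul, dotProduct, Finset.sum_apply]
    rw [hcomb, map_sum]
    apply Finset.sum_eq_zero
    intro j _
    rw [LinearMap.map_smul]
    have : D (A j) = 0 := by
      have := hDzero (j : ℕ) j.isLt
      exact this
    rw [this, smul_zero]
  -- conclude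
  apply hφ
  rw [_root_.map_mul, map_sum]
  have hrw : ∀ i : Fin (k + 1),
      φ ((-1 : R) ^ (k - (i : ℕ)) * bracket p n (n - k) (g i) ι * Lpoly p n (t i))
      = ((-1 : K) ^ (k - (i : ℕ)) * (SMg i).det) * (FM i).det := by
    intro i
    rw [_root_.map_mul, _root_.map_mul, _root_.map_pow, _root_.map_neg, _root_.map_one, hmapB, hLt i]
  rw [Finset.sum_congr rfl (fun i _ => hrw i), hmapB, hLn]
  have hupdf : SMf.updateRow lastm (fun c => v n (ι c)) = SMf := by
    have : (fun c => v n (ι c)) = SMf lastm := by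
      funext c; rw [hSMf]; simp [hflast]
    rw [this, Matrix.updateRow_eq_self]
  have hupdF : ∀ i, (FM i).updateRow lastn (v n) = FM i := by
    intro i
    have : v n = (FM i) lastn := by
      funext a
      have : ei i lastn = n := by
        simp only [hei, hlastn]
        have := htn i
        rw [if_neg (by omega)]
        omega
      rw [hFM]
      simp [this]
    rw [this, Matrix.updateRow_eq_self]
  have h2 : D (v n) = A.det * SMf.det - ∑ i : Fin (k + 1),
      ((-1 : K) ^ (k - (i : ℕ)) * (SMg i).det) * (FM i).det := by
    rw [hDval (v n)]
    rw [hupdf]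
    congr 1
    apply Finset.sum_congr rfl
    intro i _
    rw [hupdF i]
  rw [hvn] at h2
  have h3 : A.det * SMf.det = ∑ i : Fin (k + 1),
      ((-1 : K) ^ (k - (i : ℕ)) * (SMg i).det) * (FM i).det := by
    exact sub_eq_zero.mp h2.symm
  exact h3
end

section
/- (The computation of μ(q) in the proof of Theorem 1.1 of the paper.) Let p be an odd prime, h := (p−1)/2, and for a non-negative integer q define μ(q) := (−1)^{h·q(q−1)/2} · (h!)^q as an element of 𝔽_p = ZMod p. Then for all non-negative integers k, m and a_1,…,a_m, if q = k + 2(p^{a_1} + p^{a_2} + … + p^{a_m}), then μ(q) = (−1)^m · μ(k) in 𝔽_p. -/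
/-- `μ(q) = (−1)^{h·q(q−1)/2} · (h!)^q ∈ 𝔽_p`, where `h = (p−1)/2`. -/
def mu (p q : ℕ) : ZMod p :=
  (-1) ^ ((p - 1) / 2 * (q * (q - 1) / 2)) * (Nat.factorial ((p - 1) / 2) : ZMod p) ^ q

/-- Half-factorial squared: `(h!)^2 = (-1)^(h+1)` in `𝔽_p`. -/
lemma half_factorial_sq (p : ℕ) (hp : p.Prime) (hodd : Odd p) :
    (Nat.factorial ((p - 1) / 2) : ZMod p) ^ 2 = (-1) ^ ((p - 1) / 2 + 1) := by
  haveI : Fact p.Prime := ⟨hp⟩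
  set h := (p - 1) / 2 with hh
  have hple : h ≤ p - 1 := Nat.div_le_self _ _
  have hph : p - 1 - h = h := by
    obtain ⟨t, ht⟩ := hodd; omega
  have key : (h.factorial : ℕ) * (p - 1).descFactorial h = (p - 1).factorial := by
    have := Nat.factorial_mul_descFactorial hple
    rwa [hph] at this
  have hcast : ((p - 1).descFactorial h : ZMod p) = (-1) ^ h * h.factorial :=
    ZMod.cast_descFactorial (by omega)
  have hw : ((p - 1).factorial : ZMod p) = -1 := ZMod.wilsons_lemma p
  have hmain : (h.factorial : ZMod p) * ((-1) ^ h * h.factorial) = -1 := by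
    rw [← hcast, ← Nat.cast_mul, key, hw]
  have h2 : (-1 : ZMod p) ^ h * ((h.factorial : ZMod p) ^ 2) = -1 := by
    rw [sq]; linear_combination hmain
  calc (h.factorial : ZMod p) ^ 2
      = (-1) ^ h * ((-1) ^ h * (h.factorial : ZMod p) ^ 2) := by
        rw [← mul_assoc, ← pow_add, ← two_mul, pow_mul]; ring
    _ = (-1) ^ h * (-1) := by rw [h2]
    _ = (-1) ^ (h + 1) := by rw [pow_succ]

/-- Triangular number identity. -/
lemma tri_aux (k S : ℕ) :
    (k + 2 * S) * (k + 2 * S - 1) / 2 = k * (k - 1) / 2 + S * (2 * k + 2 * S - 1) := by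
  rcases Nat.eq_zero_or_pos S with h0 | hpos
  · simp [h0]
  · obtain ⟨S', rfl⟩ : ∃ S', S = S' + 1 := ⟨S - 1, by omega⟩
    rcases Nat.eq_zero_or_pos k with hk0 | hkpos
    · subst hk0
      have e2 : 0 + 2 * (S' + 1) - 1 = 2 * S' + 1 := by omega
      rw [e2]
      have : (0 + 2 * (S' + 1)) * (2 * S' + 1) = 2 * ((S' + 1) * (2 * S' + 1)) := by ring
      rw [this]; simp [Nat.mul_div_cancel_left]
    · obtain ⟨k', rfl⟩ : ∃ k', k = k' + 1 := ⟨k - 1, by omega⟩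
      have e2 : k' + 1 + 2 * (S' + 1) - 1 = k' + 2 * S' + 2 := by omega
      have e3 : (k' + 1) - 1 = k' := by omega
      have e4 : 2 * (k' + 1) + 2 * (S' + 1) - 1 = 2 * k' + 2 * S' + 3 := by omega
      rw [e2, e3, e4]
      have key : (k' + 1 + 2 * (S' + 1)) * (k' + 2 * S' + 2)
          = (k' + 1) * k' + 2 * ((S' + 1) * (2 * k' + 2 * S' + 3)) := by ring
      rw [key, Nat.add_mul_div_left _ _ (by norm_num : 0 < 2)]

/-- Parity of the correction exponent. -/
lemma sign_aux (h k S : ℕ) :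
    (h * (S * (2 * k + 2 * S - 1)) + (h + 1) * S) % 2 = S % 2 := by
  rcases Nat.eq_zero_or_pos S with h0 | hpos
  · simp [h0]
  · obtain ⟨S', rfl⟩ : ∃ S', S = S' + 1 := ⟨S - 1, by omega⟩
    have e1 : 2 * k + 2 * (S' + 1) - 1 = 2 * k + 2 * S' + 1 := by omega
    rw [e1]
    have e : h * ((S' + 1) * (2 * k + 2 * S' + 1)) + (h + 1) * (S' + 1)
        = 2 * (h * ((S' + 1) * (k + S' + 1))) + (S' + 1) := by ring
    rw [e]
    generalize h * ((S' + 1) * (k + S' + 1)) = X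
    omega

/-- The computation of `μ(q)` in the proof of Theorem 1.1: if
`q = k + 2(p^{a_1} + … + p^{a_m})` then `μ(q) = (−1)^m · μ(k)` in `𝔽_p`. -/
theorem statement6 (p : ℕ) (hp : p.Prime) (hodd : Odd p) (k m : ℕ) (a : Fin m → ℕ)
    (q : ℕ) (hq : q = k + 2 * ∑ i, p ^ a i) :
    mu p q = (-1) ^ m * mu p k := by
  haveI : Fact p.Prime := ⟨hp⟩
  subst hq
  set h := (p - 1) / 2 with hh
  obtain ⟨S, hS⟩ : ∃ S, ∑ i, p ^ a i = S := ⟨_, rfl⟩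
  -- parity of S equals parity of m
  have hSm : S % 2 = m % 2 := by
    have hodd2 : ∀ i : Fin m, p ^ a i % 2 = 1 := fun i => Nat.odd_iff.mp (hodd.pow)
    have h1 : S % 2 = (∑ i : Fin m, p ^ a i % 2) % 2 := by
      rw [← hS, Finset.sum_nat_mod]
    have h2 : (∑ i : Fin m, p ^ a i % 2) = ∑ _i : Fin m, 1 :=
      Finset.sum_congr rfl fun i _ => hodd2 i
    simp only [h1, h2, Finset.sum_const, Finset.card_univ, Fintype.card_fin, smul_eq_mul,
      mul_one]
  rw [hS]
  unfold mu
  rw [← hh]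
  have hfq : (Nat.factorial h : ZMod p) ^ (k + 2 * S)
      = (Nat.factorial h : ZMod p) ^ k * ((-1) ^ ((h + 1) * S)) := by
    rw [pow_add, pow_mul, half_factorial_sq p hp hodd, ← hh, ← pow_mul]
  rw [hfq, tri_aux k S, Nat.mul_add, pow_add]
  have sign : (-1 : ZMod p) ^ (h * (S * (2 * k + 2 * S - 1))) * (-1) ^ ((h + 1) * S)
      = (-1) ^ m := by
    rw [← pow_add, neg_one_pow_eq_pow_mod_two, show ((-1 : ZMod p)) ^ m
      = (-1) ^ (m % 2) from neg_one_pow_eq_pow_mod_two ..]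
    rw [sign_aux h k S, hSm]
  calc (-1 : ZMod p) ^ (h * (k * (k - 1) / 2)) * (-1) ^ (h * (S * (2 * k + 2 * S - 1)))
        * ((Nat.factorial h : ZMod p) ^ k * (-1) ^ ((h + 1) * S))
      = ((-1) ^ (h * (S * (2 * k + 2 * S - 1))) * (-1) ^ ((h + 1) * S))
        * ((-1) ^ (h * (k * (k - 1) / 2)) * (Nat.factorial h : ZMod p) ^ k) := by ring
    _ = (-1) ^ m * ((-1) ^ (h * (k * (k - 1) / 2)) * (Nat.factorial h : ZMod p) ^ k) := by
        rw [sign]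
end

section
/- (The sign identity used in the proof of Proposition 4.3 of the paper.) Let n ≥ 1, let 1 ≤ s_1 < … < s_k ≤ n−1 with 0 ≤ k ≤ n−1, set s_0 := 0, and let 0 ≤ t ≤ k. Let h_1 < … < h_{n−k−1} be the increasing enumeration of {1,…,n−1} ∖ {s_1,…,s_k}. Then in the exterior algebra A over R one has [k; h_1,…,h_{n−k−1}, s_t] = (−1)^{n−1−k+s_t−t} · M_{n, s_0,…,ŝ_t,…,s_k}, where the Mùi bracket on the left has the n−k exponents h_1,…,h_{n−k−1}, s_t in that (not necessarily increasing) order, and M_{n,s_0,…,ŝ_t,…,s_k} is the Mùi invariant on the k indices s_0,…,s_k with s_t omitted. -/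
set_option synthInstance.maxHeartbeats 1000000
set_option maxHeartbeats 1000000

lemma aux_strictMono_le {N : ℕ} {f : Fin N → ℕ} (hf : StrictMono f) (i : Fin N) :
    (i : ℕ) ≤ f i := by
  have key : ∀ j : ℕ, ∀ hj : j < N, j ≤ f ⟨j, hj⟩ := by
    intro j
    induction j with
    | zero => intro hj; exact Nat.zero_le _
    | succ j ih =>
      intro hj
      have h1 := ih (Nat.lt_of_succ_lt hj)
      have h2 : f ⟨j, Nat.lt_of_succ_lt hj⟩ < f ⟨j + 1, hj⟩ := hf (by simp [Fin.lt_def])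
      omega
  have := key i i.isLt
  simpa using this

lemma aux_downward {N : ℕ} (S : Finset (Fin N))
    (hdc : ∀ a b : Fin N, a ≤ b → b ∈ S → a ∈ S) (j : Fin N) :
    j ∈ S ↔ (j : ℕ) < S.card := by
  constructor
  · intro hj
    have hsub : Finset.Iic j ⊆ S := fun a ha => hdc a j (Finset.mem_Iic.mp ha) hj
    have := Finset.card_le_card hsub
    rw [Fin.card_Iic] at this; omega
  · intro hj
    by_contra hjS
    have hsub : S ⊆ Finset.Iio j := by
      intro a ha
      rw [Finset.mem_Iio]
      by_contra hle
      exact hjS (hdc j a (le_of_not_gt hle) ha)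
    have := Finset.card_le_card hsub
    rw [Fin.card_Iio] at this; omega

lemma aux_card_filter_lt {N c : ℕ} (hc : c ≤ N) :
    (Finset.univ.filter fun j : Fin N => (j : ℕ) < c).card = c := by
  have h1 := Finset.filter_map (s := (Finset.univ : Finset (Fin N)))
    (f := Fin.valEmbedding) (p := (· < c))
  rw [Fin.map_valEmbedding_univ] at h1
  have h2 : (Finset.Iio N).filter (· < c) = Finset.Iio c := by
    ext x
    simp only [Finset.mem_filter, Finset.mem_Iio]
    omega
  rw [h2] at h1
  have h3 := congrArg Finset.card h1
  rw [Finset.card_map, Nat.card_Iio] at h3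
  have h4 : (Finset.univ.filter fun j : Fin N => (j : ℕ) < c)
      = Finset.univ.filter ((· < c) ∘ ⇑Fin.valEmbedding) := by
    ext j; simp
  rw [h4]
  exact h3.symm


set_option linter.unusedVariables false

/-- The sign identity used in the proof of Proposition 4.3.  Let
`0 = s_0 < s_1 < … < s_k ≤ n−1` (so `s : Fin (k+1) → ℕ` with `s 0 = 0`), let
`0 ≤ t ≤ k`, let `h_1 < … < h_{n−k−1}` enumerate `{1,…,n−1} ∖ {s_1,…,s_k}`, and let
`g_1 < … < g_{n−k}` enumerate `{0,…,n−1} ∖ {s_0,…,ŝ_t,…,s_k}` (so that the Mùi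
invariant `M_{n,s_0,…,ŝ_t,…,s_k}` is the Mùi bracket `[k; g]`).  Then
`[k; h_1,…,h_{n−k−1}, s_t] = (−1)^{n−1−k+s_t−t} · M_{n,s_0,…,ŝ_t,…,s_k}`. -/
theorem statement7 (p n k : ℕ) (hp : p.Prime) (hodd : Odd p) (hn : 1 ≤ n)
    (hk : k ≤ n - 1) (s : Fin (k + 1) → ℕ) (hs0 : s 0 = 0) (hs : StrictMono s)
    (hsn : ∀ i, s i ≤ n - 1) (t : Fin (k + 1))
    (h : Fin (n - k - 1) → ℕ) (hh : StrictMono h)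
    (hhim : Finset.image h Finset.univ =
      Finset.Icc 1 (n - 1) \ Finset.image (fun j : Fin k => s j.succ) Finset.univ)
    (g : Fin (n - k) → ℕ) (hg : StrictMono g)
    (hgim : Finset.image g Finset.univ =
      Finset.range n \ Finset.image (fun j : Fin k => s (t.succAbove j)) Finset.univ) :
    muiBracket p n k
        (fun j : Fin (n - k) =>
          if hj : (j : ℕ) < n - k - 1 then h ⟨(j : ℕ), hj⟩ else s t) =
      (-1 : ExtAlg p n) ^ (n - 1 - k + s t - (t : ℕ)) * muiBracket p n k g := by
  have hkn : k < n := by omega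
  have hts : (t : ℕ) ≤ s t := aux_strictMono_le hs t
  have htk : (t : ℕ) ≤ k := by have := t.isLt; omega
  have hstn := hsn t
  -- r := rank of s t
  set r : ℕ := s t - (t : ℕ) with hrdef
  -- cardinality of the filter
  have hc : (Finset.univ.filter fun j : Fin (n - k - 1) => h j < s t).card = r := by
    have h2 : (Finset.univ.filter fun j : Fin (n - k - 1) => h j < s t).card
        = ((Finset.image h Finset.univ).filter (· < s t)).card := by
      rw [Finset.filter_image, Finset.card_image_of_injective _ hh.injective]
    rw [h2, hhim]
    by_cases ht0 : (t : ℕ) = 0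
    · have ht0' : t = 0 := Fin.ext ht0
      have hst0 : s t = 0 := by rw [ht0', hs0]
      have : ((Finset.Icc 1 (n - 1) \
          Finset.image (fun j : Fin k => s j.succ) Finset.univ).filter (· < s t)) = ∅ := by
        ext x
        simp [hst0]
      rw [this]
      simp [hrdef, hst0, ht0]
    · have hst1 : 1 ≤ s t := by
        have h0t : (0 : Fin (k + 1)) < t := by
          rw [Fin.lt_def]; simpa using Nat.pos_of_ne_zero ht0
        have := hs h0t
        omega
      have e1 : ((Finset.Icc 1 (n - 1) \
            Finset.image (fun j : Fin k => s j.succ) Finset.univ).filter (· < s t))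
          = Finset.Ico 1 (s t) \ (Finset.Ico 1 (s t) ∩
            Finset.image (fun j : Fin k => s j.succ) Finset.univ) := by
        ext x
        simp only [Finset.mem_filter, Finset.mem_sdiff, Finset.mem_Icc, Finset.mem_Ico,
          Finset.mem_inter]
        constructor
        · rintro ⟨⟨⟨hx1, hx2⟩, hxA⟩, hxlt⟩
          exact ⟨⟨hx1, hxlt⟩, fun hh' => hxA hh'.2⟩
        · rintro ⟨⟨hx1, hxlt⟩, hxA⟩
          exact ⟨⟨⟨hx1, by omega⟩, fun ha => hxA ⟨⟨hx1, hxlt⟩, ha⟩⟩, hxlt⟩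
      rw [e1, Finset.card_sdiff_of_subset Finset.inter_subset_left]
      have e2 : Finset.Ico 1 (s t) ∩ Finset.image (fun j : Fin k => s j.succ) Finset.univ
          = Finset.image (fun j : Fin k => s j.succ)
              (Finset.univ.filter fun j : Fin k => (j : ℕ) < (t : ℕ) - 1) := by
        ext x
        simp only [Finset.mem_inter, Finset.mem_Ico, Finset.mem_image, Finset.mem_filter,
          Finset.mem_univ, true_and]
        constructor
        · rintro ⟨⟨hx1, hxlt⟩, j, rfl⟩
          refine ⟨j, ?_, rfl⟩
          have : j.succ < t := hs.lt_iff_lt.mp hxlt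
          rw [Fin.lt_def, Fin.val_succ] at this
          omega
        · rintro ⟨j, hj, rfl⟩
          have hlt : j.succ < t := by
            rw [Fin.lt_def, Fin.val_succ]; omega
          have h1 : s j.succ < s t := hs hlt
          have h0 : s 0 < s j.succ := hs (Fin.succ_pos j)
          rw [hs0] at h0
          exact ⟨⟨by omega, h1⟩, j, rfl⟩
      rw [e2, Finset.card_image_of_injective _ (show Function.Injective fun j : Fin k => s j.succ from
          fun a b hab => Fin.succ_injective k (hs.injective hab)),
        aux_card_filter_lt (by omega), Nat.card_Ico]
      omega
  -- r ≤ n - k - 1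
  have hrM1 : r ≤ n - k - 1 := by
    have h5 := Finset.card_filter_le (Finset.univ : Finset (Fin (n - k - 1)))
      (fun j => h j < s t)
    rw [hc, Finset.card_univ, Fintype.card_fin] at h5
    exact h5
  -- h j < s t ↔ j < r
  have hF1 : ∀ j : Fin (n - k - 1), h j < s t ↔ (j : ℕ) < r := by
    intro j
    have := aux_downward (Finset.univ.filter fun j : Fin (n - k - 1) => h j < s t)
      (fun a b hab hb => by
        simp only [Finset.mem_filter, Finset.mem_univ, true_and] at hb ⊢
        exact lt_of_le_of_lt (hh.monotone hab) hb) j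
    rw [hc] at this
    simpa using this
  -- h j ≠ s t
  have hF2 : ∀ j : Fin (n - k - 1), h j ≠ s t := by
    intro j heq
    have hmem : s t ∈ Finset.image h Finset.univ := by
      rw [← heq]; exact Finset.mem_image_of_mem h (Finset.mem_univ j)
    rw [hhim] at hmem
    simp only [Finset.mem_sdiff, Finset.mem_Icc, Finset.mem_image, Finset.mem_univ,
      true_and, not_exists] at hmem
    obtain ⟨⟨h1', h2'⟩, h3'⟩ := hmem
    by_cases ht0 : t = 0
    · rw [ht0, hs0] at h1'; omega
    · obtain ⟨j', rfl⟩ := Fin.eq_succ_of_ne_zero ht0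
      exact h3' j' rfl
  -- the target set T
  have hS'card : (Finset.image (fun j : Fin k => s (t.succAbove j)) Finset.univ).card = k := by
    rw [Finset.card_image_of_injective _ (show Function.Injective fun j : Fin k => s (t.succAbove j) from
      fun a b hab => Fin.succAbove_right_injective (hs.injective hab))]
    simp
  have hS'sub : Finset.image (fun j : Fin k => s (t.succAbove j)) Finset.univ ⊆
      Finset.range n := by
    intro x hx
    simp only [Finset.mem_image, Finset.mem_univ, true_and] at hx
    obtain ⟨j, rfl⟩ := hx
    rw [Finset.mem_range]
    have := hsn (t.succAbove j)
    omega
  have hTcard : (Finset.range n \ Finset.image (fun j : Fin k => s (t.succAbove j)) Finset.univ).card = n - k := by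
    rw [Finset.card_sdiff_of_subset hS'sub, Finset.card_range, hS'card]
  have hgT : ∀ x, g x ∈ Finset.range n \ Finset.image (fun j : Fin k => s (t.succAbove j)) Finset.univ := fun x =>
    hgim ▸ Finset.mem_image_of_mem g (Finset.mem_univ x)
  have hHT : ∀ x ∈ Finset.image h Finset.univ, x ∈ Finset.range n \ Finset.image (fun j : Fin k => s (t.succAbove j)) Finset.univ := by
    intro x hx
    rw [hhim] at hx
    simp only [Finset.mem_sdiff, Finset.mem_Icc, Finset.mem_image, Finset.mem_univ,
      true_and, not_exists] at hx ⊢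
    obtain ⟨⟨hx1, hx2⟩, hx3⟩ := hx
    refine ⟨Finset.mem_range.mpr (by omega), ?_⟩
    rintro j rfl
    by_cases h0 : t.succAbove j = 0
    · rw [h0, hs0] at hx1; omega
    · obtain ⟨j', hj'⟩ := Fin.eq_succ_of_ne_zero h0
      exact hx3 j' (by rw [← hj'])
  have hstT : s t ∈ Finset.range n \ Finset.image (fun j : Fin k => s (t.succAbove j)) Finset.univ := by
    simp only [Finset.mem_sdiff, Finset.mem_range, Finset.mem_image, Finset.mem_univ,
      true_and, not_exists]
    refine ⟨by omega, ?_⟩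
    intro j hj
    exact Fin.succAbove_ne t j (hs.injective hj)
  -- the candidate function G
  set G : Fin (n - k) → ℕ := fun j =>
    if hj : (j : ℕ) < r then h ⟨(j : ℕ), by omega⟩
    else if hj' : (j : ℕ) = r then s t
    else h ⟨(j : ℕ) - 1, by have := j.isLt; omega⟩ with hGdef
  have hGmem : ∀ x, G x ∈ Finset.range n \ Finset.image (fun j : Fin k => s (t.succAbove j)) Finset.univ := by
    intro x
    rw [hGdef]
    dsimp only
    split_ifs with h1 h2
    · exact hHT _ (Finset.mem_image_of_mem h (Finset.mem_univ _))
    · exact hstT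
    · exact hHT _ (Finset.mem_image_of_mem h (Finset.mem_univ _))
  have hGmono : StrictMono G := by
    intro a b hab
    have hab' : (a : ℕ) < (b : ℕ) := hab
    have hbb := b.isLt
    rw [hGdef]
    dsimp only
    rcases lt_trichotomy ((a : ℕ)) r with ha | ha | ha <;>
      rcases lt_trichotomy ((b : ℕ)) r with hb | hb | hb
    · rw [dif_pos ha, dif_pos hb]
      exact hh (by rw [Fin.mk_lt_mk]; omega)
    · rw [dif_pos ha, dif_neg (by omega), dif_pos hb]
      exact (hF1 _).mpr (by simpa using ha)
    · rw [dif_pos ha, dif_neg (by omega), dif_neg (by omega)]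
      exact hh (by rw [Fin.mk_lt_mk]; omega)
    · omega
    · omega
    · rw [dif_neg (by omega), dif_pos ha, dif_neg (by omega), dif_neg (by omega)]
      have hge : ¬ h ⟨(b : ℕ) - 1, by omega⟩ < s t := by
        intro hcon
        have := (hF1 _).mp hcon
        simp only [] at this
        omega
      exact lt_of_le_of_ne (not_lt.mp hge) (Ne.symm (hF2 _))
    · omega
    · omega
    · rw [dif_neg (by omega), dif_neg (by omega), dif_neg (by omega), dif_neg (by omega)]
      exact hh (by rw [Fin.mk_lt_mk]; omega)
  have hgG : g = G := by
    have e1 := Finset.orderEmbOfFin_unique hTcard (f := g) hgT hg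
    have e2 := Finset.orderEmbOfFin_unique hTcard (f := G) hGmem hGmono
    rw [e1, e2]
  have hg_lt : ∀ b : Fin (n - k), ∀ hb : (b : ℕ) < r, g b = h ⟨(b : ℕ), by omega⟩ := by
    intro b hb
    rw [hgG, hGdef]
    dsimp only
    rw [dif_pos hb]
  have hg_eq : ∀ b : Fin (n - k), ∀ hb : (b : ℕ) = r, g b = s t := by
    intro b hb
    rw [hgG, hGdef]
    dsimp only
    rw [dif_neg (by omega), dif_pos hb]
  have hg_gt : ∀ b : Fin (n - k), ∀ hb : r < (b : ℕ),
      g b = h ⟨(b : ℕ) - 1, by have := b.isLt; omega⟩ := by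
    intro b hb
    rw [hgG, hGdef]
    dsimp only
    rw [dif_neg (by omega), dif_neg (by omega)]
  -- the permutation
  have hm1 : n - k - 1 + 1 = n - k := by omega
  set sig : Equiv.Perm (Fin (n - k)) := (finCongr hm1).permCongr
    (Fin.revPerm * Fin.cycleRange (⟨n - k - 1 - r, by omega⟩ : Fin (n - k - 1 + 1)) *
      Fin.revPerm) with hsigdef
  have hsign : Equiv.Perm.sign sig = (-1) ^ (n - k - 1 - r) := by
    rw [hsigdef, Equiv.Perm.sign_permCongr, map_mul, map_mul, Fin.sign_cycleRange]
    rcases Int.units_eq_one_or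
        (Equiv.Perm.sign (Fin.revPerm : Equiv.Perm (Fin (n - k - 1 + 1)))) with hu | hu <;>
      rw [hu] <;> simp
  have hxb : ∀ b : Fin (n - k), (((finCongr hm1).symm b : Fin (n - k - 1 + 1)) : ℕ) = (b : ℕ) :=
    fun b => rfl
  have hsigval : ∀ b : Fin (n - k),
      ((sig b : ℕ)) = if (b : ℕ) < r then (b : ℕ)
        else if (b : ℕ) = r then n - k - 1 else (b : ℕ) - 1 := by
    intro b
    have hb := b.isLt
    rw [hsigdef, Equiv.permCongr_apply, Equiv.Perm.mul_apply, Equiv.Perm.mul_apply]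
    rcases lt_trichotomy ((b : ℕ)) r with hbr | hbr | hbr
    · rw [if_pos hbr]
      have hgt : (⟨n - k - 1 - r, by omega⟩ : Fin (n - k - 1 + 1)) <
          Fin.revPerm ((finCongr hm1).symm b) := by
        rw [Fin.lt_def, Fin.revPerm_apply, Fin.val_rev, hxb b]
        simp only [Fin.val_mk]
        omega
      rw [Fin.cycleRange_of_gt hgt, Fin.revPerm_apply, Fin.revPerm_apply, Fin.rev_rev]
      simp
    · rw [if_neg (by omega), if_pos hbr]
      have heq : Fin.revPerm ((finCongr hm1).symm b) =
          (⟨n - k - 1 - r, by omega⟩ : Fin (n - k - 1 + 1)) := by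
        apply Fin.ext
        rw [Fin.revPerm_apply, Fin.val_rev, hxb b]
        simp only [Fin.val_mk]
        omega
      rw [heq, Fin.cycleRange_self, Fin.revPerm_apply]
      rw [finCongr_apply, Fin.coe_cast, Fin.val_rev]
      simp
    · rw [if_neg (by omega), if_neg (by omega)]
      have hlt : Fin.revPerm ((finCongr hm1).symm b) <
          (⟨n - k - 1 - r, by omega⟩ : Fin (n - k - 1 + 1)) := by
        rw [Fin.lt_def, Fin.revPerm_apply, Fin.val_rev, hxb b]
        simp only [Fin.val_mk]
        omega
      rw [Fin.cycleRange_of_lt hlt]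
      have hlast : Fin.revPerm ((finCongr hm1).symm b) < Fin.last (n - k - 1) :=
        lt_of_lt_of_le hlt (Fin.le_last _)
      have hv2 : ((Fin.revPerm ((finCongr hm1).symm b) + 1 : Fin (n - k - 1 + 1)) : ℕ)
          = (n - k - 1 - (b : ℕ)) + 1 := by
        rw [Fin.val_add_one_of_lt hlast, Fin.revPerm_apply, Fin.val_rev, hxb b]
        omega
      rw [finCongr_apply, Fin.coe_cast, Fin.revPerm_apply, Fin.val_rev, hv2]
      omega
  have hcomp : ∀ b : Fin (n - k),
      g b = (fun j : Fin (n - k) =>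
        if hj : (j : ℕ) < n - k - 1 then h ⟨(j : ℕ), hj⟩ else s t) (sig b) := by
    intro b
    have hb := b.isLt
    have hv := hsigval b
    dsimp only
    rcases lt_trichotomy ((b : ℕ)) r with hbr | hbr | hbr
    · rw [if_pos hbr] at hv
      rw [hg_lt b hbr, dif_pos (show ((sig b : ℕ)) < n - k - 1 by omega)]
      exact congrArg h (Fin.ext (by simp only [Fin.val_mk]; omega))
    · rw [if_neg (by omega), if_pos hbr] at hv
      rw [hg_eq b hbr, dif_neg (by omega)]
    · rw [if_neg (by omega), if_neg (by omega)] at hv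
      rw [hg_gt b hbr, dif_pos (show ((sig b : ℕ)) < n - k - 1 by omega)]
      exact congrArg h (Fin.ext (by simp only [Fin.val_mk]; omega))
  -- determinant identity
  set C : MvPolynomial (Fin n) (ZMod p) := (-1) ^ (n - k - 1 - r) with hCdef
  have hCC : C * C = 1 := by
    rw [hCdef, ← pow_add]
    exact Even.neg_one_pow ⟨n - k - 1 - r, rfl⟩
  have hdet : ∀ ι : Fin (n - k) → Fin n,
      bracket p n (n - k) g ι = C * bracket p n (n - k)
        (fun j : Fin (n - k) =>
          if hj : (j : ℕ) < n - k - 1 then h ⟨(j : ℕ), hj⟩ else s t) ι := by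
    intro ι
    have hmat : (Matrix.of fun a b : Fin (n - k) =>
        (MvPolynomial.X (ι a) : MvPolynomial (Fin n) (ZMod p)) ^ p ^ g b)
        = (Matrix.of fun a b : Fin (n - k) =>
            (MvPolynomial.X (ι a) : MvPolynomial (Fin n) (ZMod p)) ^ p ^
              ((fun j : Fin (n - k) =>
                if hj : (j : ℕ) < n - k - 1 then h ⟨(j : ℕ), hj⟩ else s t) b)).submatrix
            id sig := by
      ext a b
      simp only [Matrix.submatrix_apply, Matrix.of_apply, id_eq]
      rw [hcomp b]
    rw [bracket, bracket, hmat, Matrix.det_permute', hsign]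
    congr 1
    push_cast
    rw [hCdef]
  have hbr : ∀ ι : Fin (n - k) → Fin n,
      bracket p n (n - k)
        (fun j : Fin (n - k) =>
          if hj : (j : ℕ) < n - k - 1 then h ⟨(j : ℕ), hj⟩ else s t) ι
      = C * bracket p n (n - k) g ι := by
    intro ι
    rw [hdet ι, ← mul_assoc, hCC, one_mul]
  have hCA : (algebraMap (MvPolynomial (Fin n) (ZMod p)) (ExtAlg p n)) C
      = (-1 : ExtAlg p n) ^ (n - 1 - k + s t - (t : ℕ)) := by
    rw [hCdef, map_pow, map_neg, map_one, neg_one_pow_eq_pow_mod_two,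
      neg_one_pow_eq_pow_mod_two (n := n - 1 - k + s t - (t : ℕ))]
    congr 1
    omega
  unfold muiBracket
  rw [Finset.mul_sum]
  refine Finset.sum_congr rfl fun I _ => ?_
  by_cases hI : I.card = k
  · simp only [dif_pos hI]
    rw [hbr]
    rw [map_mul, Algebra.left_comm, ← mul_smul_comm, hCA]
  · simp only [dif_neg hI, mul_zero]
end
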